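/- arXiv:2103.07106 — 8 statements merged into one kernel-verified Lean document; each statement's English description precedes it below -/
import Mathlib

section
/- Let n ≥ 5 be an integer and x ≥ 2^n a real number. Then there are at least n+1 primes p with x < p < 2x. -/
open Real

theorem myRealIneq {x : ℝ} (hx : (1024 : ℝ) ≤ x) :
    x ^ (4 : ℝ) * (2 * x) ^ (5 * √(2 * x)) * 4 ^ (8 * x / 3) ≤ 4 ^ (4 * x) := by
  let f : ℝ → ℝ := fun x => 4 * log x + 5 * (√(2 * x) * log (2 * x)) - 4 * log 4 / 3 * x
  have hx0 : (0:ℝ) < x := lt_of_lt_of_le (by norm_num) hx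
  have h2x : (0:ℝ) < 2 * x := by linarith
  have hconc : ConcaveOn ℝ (Set.Ioi 0.5) f := by
    apply ConcaveOn.sub
    · apply ConcaveOn.add
      · exact (strictConcaveOn_log_Ioi.concaveOn.subset
          (Set.Ioi_subset_Ioi (by norm_num)) (convex_Ioi 0.5)).smul (by norm_num)
      · have base : ConcaveOn ℝ (Set.Ioi 0.5) (fun x => √(2 * x) * log (2 * x)) := by
          convert ((strictConcaveOn_sqrt_mul_log_Ioi.concaveOn.comp_linearMap
            ((2 : ℝ) • LinearMap.id))) using 1
          iterate 2 rfl
          ext y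
          simp only [Set.mem_Ioi, Set.mem_preimage, LinearMap.smul_apply,
            LinearMap.id_coe, id_eq, smul_eq_mul]
          rw [← mul_lt_mul_iff_right₀ (two_pos)]
          norm_num1
          rfl
          rfl
        exact base.smul (by norm_num)
    · apply ConvexOn.smul
      · positivity
      · exact convexOn_id (convex_Ioi (0.5 : ℝ))
  have hL : (0:ℝ) < log 2 := log_pos (by norm_num)
  have hlog4 : log 4 = 2 * log 2 := by
    rw [show (4:ℝ) = 2 ^ 2 by norm_num, log_pow]; push_cast; ring
  have h18 : 0 ≤ f 18 := by
    have hs : √(2 * 18 : ℝ) = 6 := by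
      rw [show (2 * 18 : ℝ) = 6 ^ 2 by norm_num, sqrt_sq (by norm_num)]
    have l1 : 4 * log 2 ≤ log 18 := by
      calc 4 * log 2 = log 16 := by
            rw [show (16:ℝ) = 2 ^ 4 by norm_num, log_pow]; push_cast; ring
        _ ≤ log 18 := log_le_log (by norm_num) (by norm_num)
    have l2 : 5 * log 2 ≤ log (2 * 18 : ℝ) := by
      calc 5 * log 2 = log 32 := by
            rw [show (32:ℝ) = 2 ^ 5 by norm_num, log_pow]; push_cast; ring
        _ ≤ log (2 * 18) := log_le_log (by norm_num) (by norm_num)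
    simp only [f, hs]
    norm_num at l1 l2 ⊢
    linarith
  have h1024 : f 1024 ≤ 0 := by
    have hs : √(2 * 1024 : ℝ) ≤ 46 := by
      calc √(2 * 1024 : ℝ) ≤ √(46 ^ 2 : ℝ) := sqrt_le_sqrt (by norm_num)
        _ = 46 := sqrt_sq (by norm_num)
    have hs0 : (0:ℝ) ≤ √(2 * 1024 : ℝ) := sqrt_nonneg _
    have l1 : log 1024 = 10 * log 2 := by
      rw [show (1024:ℝ) = 2 ^ 10 by norm_num, log_pow]; push_cast; ring
    have l2 : log (2 * 1024 : ℝ) = 11 * log 2 := by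
      rw [show (2 * 1024 : ℝ) = 2 ^ 11 by norm_num, log_pow]; push_cast; ring
    simp only [f, l1, l2, hlog4]
    norm_num at hs hs0 ⊢
    nlinarith [hL, hs, hs0]
  have hfx : f x ≤ 0 := by
    have hmem18 : (18:ℝ) ∈ Set.Ioi (0.5:ℝ) := by norm_num
    have hmemx : x ∈ Set.Ioi (0.5:ℝ) := by simp only [Set.mem_Ioi]; linarith
    exact (hconc.right_le_of_le_left'' hmem18 hmemx (by norm_num) hx
      (h1024.trans h18)).trans h1024
  -- convert to the power inequality
  have hlhs : (0:ℝ) < x ^ (4:ℝ) * (2*x) ^ (5 * √(2*x)) * 4 ^ (8*x/3) := by positivity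
  have hrhs : (0:ℝ) < (4:ℝ) ^ (4*x) := by positivity
  rw [← log_le_log_iff hlhs hrhs, log_mul (by positivity) (by positivity),
    log_mul (by positivity) (by positivity), log_rpow hx0, log_rpow h2x,
    log_rpow (by norm_num), log_rpow (by norm_num)]
  have : 4 * log x + 5 * (√(2*x) * log (2*x)) ≤ 4 * log 4 / 3 * x := by
    have := hfx; simp only [f] at this; linarith
  nlinarith [this]


open Real in
theorem myNatIneq {N : ℕ} (hN : 1024 ≤ N) :
    N ^ 4 * (2 * N) ^ (5 * Nat.sqrt (2 * N)) * 4 ^ (4 * (2 * N / 3)) ≤ 4 ^ (4 * N) := by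
  rw [← @Nat.cast_le ℝ]
  have hx : (1024 : ℝ) ≤ (N : ℝ) := by exact_mod_cast hN
  simp only [Nat.cast_mul, Nat.cast_pow, Nat.cast_ofNat, ← Real.rpow_natCast]
  refine le_trans ?_ (myRealIneq hx)
  gcongr
  · linarith
  · have := Real.nat_sqrt_le_real_sqrt (a := 2 * N)
    push_cast at this ⊢
    exact this
  · norm_num
  · have := Nat.cast_div_le (α := ℝ) (m := 2 * N) (n := 3)
    push_cast at this ⊢
    linarith

open Finset in
theorem cb_count_bound (N : ℕ) (hN : 2 < N) :
    Nat.centralBinom N ≤ (2 * N) ^ Nat.sqrt (2 * N) * 4 ^ (2 * N / 3)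
      * (2 * N) ^ ((Finset.Ioc N (2 * N)).filter Nat.Prime).card := by
  have n_pos : 0 < N := by omega
  have n2_pos : 1 ≤ 2 * N := by omega
  set T := (Finset.Ioc N (2 * N)).filter Nat.Prime with hT
  set g : ℕ → ℕ := fun p => p ^ (Nat.centralBinom N).factorization p with hg
  have hdisj : Disjoint (Finset.range (2 * N / 3 + 1)) T := by
    rw [Finset.disjoint_left]
    intro p hp hpT
    rw [Finset.mem_range] at hp
    rw [hT, Finset.mem_filter, Finset.mem_Ioc] at hpT
    have : 2 * N / 3 ≤ N := by omega
    omega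
  have hsub : Finset.range (2 * N / 3 + 1) ∪ T ⊆ Finset.range (2 * N + 1) := by
    intro p hp
    rw [Finset.mem_union] at hp
    rw [Finset.mem_range]
    rcases hp with hp | hp
    · rw [Finset.mem_range] at hp
      have : 2 * N / 3 ≤ 2 * N := Nat.div_le_self _ _
      omega
    · rw [hT, Finset.mem_filter, Finset.mem_Ioc] at hp
      omega
  have heq : Nat.centralBinom N = ∏ p ∈ Finset.range (2 * N / 3 + 1) ∪ T, g p := by
    rw [Finset.prod_subset hsub ?_]
    · exact (Nat.prod_pow_factorization_centralBinom N).symm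
    · intro x hx hxu
      rw [Finset.mem_range] at hx
      by_cases hp : x.Prime
      · by_cases hxN : x ≤ N
        · have h1 : ¬ x < 2 * N / 3 + 1 := by
            intro h; exact hxu (Finset.mem_union_left _ (Finset.mem_range.mpr h))
          have h2 : 2 * N < 3 * x := by
            rw [not_lt, Nat.succ_le_iff, Nat.div_lt_iff_lt_mul (by norm_num)] at h1
            omega
          rw [hg]
          simp only
          rw [Nat.factorization_centralBinom_of_two_mul_self_lt_three_mul hN hxN h2, pow_zero]
        · exfalso
          apply hxu
          refine Finset.mem_union_right _ ?_
          rw [hT, Finset.mem_filter, Finset.mem_Ioc]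
          exact ⟨⟨by omega, by omega⟩, hp⟩
      · rw [hg]; simp only
        rw [Nat.factorization_eq_zero_of_not_prime _ hp, pow_zero]
  rw [heq, Finset.prod_union hdisj]
  apply Nat.mul_le_mul
  · -- product over small primes, as in Mathlib's Bertrand proof
    let S := (Finset.range (2 * N / 3 + 1)).filter Nat.Prime
    have hS : ∏ x ∈ S, g x = ∏ x ∈ Finset.range (2 * N / 3 + 1), g x := by
      refine Finset.prod_filter_of_ne fun p _ h => ?_
      contrapose! h
      rw [hg]; simp only
      rw [Nat.factorization_eq_zero_of_not_prime _ h, pow_zero]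
    rw [← hS, ← Finset.prod_filter_mul_prod_filter_not S (· ≤ Nat.sqrt (2 * N))]
    apply Nat.mul_le_mul
    · refine (Finset.prod_le_prod' fun p _ => (?_ : g p ≤ 2 * N)).trans ?_
      · exact Nat.pow_factorization_choose_le (by omega)
      have hcard : (Finset.Icc 1 (Nat.sqrt (2 * N))).card = Nat.sqrt (2 * N) := by
        rw [Nat.card_Icc, Nat.add_sub_cancel]
      rw [Finset.prod_const]
      refine pow_right_mono₀ n2_pos ((Finset.card_le_card fun x hx => ?_).trans hcard.le)
      obtain ⟨h1, h2⟩ := Finset.mem_filter.1 hx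
      exact Finset.mem_Icc.mpr ⟨(Finset.mem_filter.1 h1).2.one_lt.le, h2⟩
    · refine le_trans ?_ (primorial_le_4_pow (2 * N / 3))
      refine (Finset.prod_le_prod' fun p hp => (?_ : g p ≤ p)).trans ?_
      · obtain ⟨h1, h2⟩ := Finset.mem_filter.1 hp
        refine (pow_right_mono₀ (Finset.mem_filter.1 h1).2.one_lt.le ?_).trans (pow_one p).le
        exact Nat.factorization_choose_le_one (Nat.sqrt_lt'.mp <| not_le.1 h2)
      refine Finset.prod_le_prod_of_subset_of_one_le' (Finset.filter_subset _ _) ?_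
      exact fun p hp _ => (Finset.mem_filter.1 hp).2.one_lt.le
  · refine (Finset.prod_le_prod' fun p _ => (?_ : g p ≤ 2 * N)).trans ?_
    · exact Nat.pow_factorization_choose_le (by omega)
    rw [Finset.prod_const]

theorem eight_sq_le_two_pow : ∀ m, 10 ≤ m → 8 * m * m ≤ 2 ^ m := by
  intro m hm
  induction m, hm using Nat.le_induction with
  | base => norm_num
  | succ k hk ih =>
    rw [pow_succ]
    nlinarith [ih]

theorem large_case {N n : ℕ} (hn : 5 ≤ n) (hN : 1024 ≤ N) (hpow : 2 ^ n ≤ N) :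
    n + 1 ≤ ((Finset.Ioc N (2 * N)).filter Nat.Prime).card := by
  by_contra hcon
  push_neg at hcon
  set K := ((Finset.Ioc N (2 * N)).filter Nat.Prime).card with hKdef
  have hK : K ≤ n := by omega
  set s := Nat.sqrt (2 * N) with hs
  have h16 : 16 * n * n ≤ 2 * N := by
    rcases Nat.lt_or_ge n 10 with h | h
    · have : 16 * n * n ≤ 1296 := by nlinarith
      omega
    · have h8 := eight_sq_le_two_pow n h
      calc 16 * n * n = 2 * (8 * n * n) := by ring
        _ ≤ 2 * 2 ^ n := Nat.mul_le_mul_left 2 h8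
        _ ≤ 2 * N := Nat.mul_le_mul_left 2 hpow
  have h4n : 4 * n ≤ s := by
    have h1 : (4 * n) * (4 * n) ≤ 2 * N := by nlinarith
    calc 4 * n = Nat.sqrt ((4 * n) * (4 * n)) := (Nat.sqrt_eq (4 * n)).symm
      _ ≤ s := Nat.sqrt_le_sqrt h1
  have hcb := cb_count_bound N (by omega)
  have h4pow := Nat.four_pow_lt_mul_centralBinom N (by omega)
  have hstep : 4 ^ N < N * ((2 * N) ^ s * 4 ^ (2 * N / 3) * (2 * N) ^ K) :=
    lt_of_lt_of_le h4pow (Nat.mul_le_mul_left N hcb)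
  have hlt : 4 ^ (4 * N) < (N * ((2 * N) ^ s * 4 ^ (2 * N / 3) * (2 * N) ^ K)) ^ 4 := by
    calc 4 ^ (4 * N) = (4 ^ N) ^ 4 := by rw [← pow_mul, Nat.mul_comm]
      _ < _ := Nat.pow_lt_pow_left hstep (by norm_num)
  have hb4 : (N * ((2 * N) ^ s * 4 ^ (2 * N / 3) * (2 * N) ^ K)) ^ 4
      ≤ N ^ 4 * (2 * N) ^ (5 * s) * 4 ^ (4 * (2 * N / 3)) := by
    have e : (N * ((2 * N) ^ s * 4 ^ (2 * N / 3) * (2 * N) ^ K)) ^ 4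
        = N ^ 4 * (2 * N) ^ (4 * s + 4 * K) * 4 ^ (4 * (2 * N / 3)) := by
      rw [pow_add]; ring
    rw [e]
    have hexp : 4 * s + 4 * K ≤ 5 * s := by omega
    have := Nat.pow_le_pow_right (by omega : 0 < 2 * N) hexp
    exact Nat.mul_le_mul (Nat.mul_le_mul_left _ this) (le_refl _)
  have hfin := myNatIneq hN
  rw [← hs] at hfin
  exact absurd (lt_of_lt_of_le (lt_of_lt_of_le hlt hb4) hfin) (lt_irrefl _)
set_option maxRecDepth 10000

def countIn (L : List ℕ) (lo hi : ℕ) : ℕ :=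
  (L.filter (fun p => decide (lo < p) && decide (p ≤ hi))).length

def sortedLt : List ℕ → Bool
  | [] => true
  | [_] => true
  | a :: b :: t => (decide (a < b) && sortedLt (b :: t))

theorem sortedLt_chain' : ∀ l, sortedLt l = true → List.Chain' (· < ·) l
  | [], _ => List.isChain_nil
  | [a], _ => List.isChain_singleton a
  | a :: b :: t, h => by
    rw [sortedLt, Bool.and_eq_true, decide_eq_true_eq] at h
    exact List.isChain_cons_cons.mpr ⟨h.1, sortedLt_chain' (b :: t) h.2⟩

def bandOK (L : List ℕ) (m b : ℕ) : List ℕ → Bool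
  | [] => true
  | c :: rest => (decide (m ≤ countIn L (rest.headD b - 1) (2 * c)) && bandOK L m b rest)

theorem prime_of_cert {p : ℕ} (hp : p ≤ 4096) (h2 : 2 ≤ p)
    (h : ∀ m, 2 ≤ m → m ≤ 64 → m ∣ p → m = p) : p.Prime := by
  by_contra hnp
  have h0 : p ≠ 1 := by omega
  have hq := Nat.minFac_prime h0
  have hdvd := Nat.minFac_dvd p
  have hlt : p.minFac < p := (Nat.not_prime_iff_minFac_lt h2).mp hnp
  have hsq : p.minFac ^ 2 ≤ p := Nat.minFac_sq_le_self (by omega) hnp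
  have h64 : p.minFac ≤ 64 := by nlinarith [hsq]
  exact absurd (h _ hq.two_le h64 hdvd) (by omega)

theorem countIn_le_card {L : List ℕ} (hL : ∀ p ∈ L, p.Prime) (hnd : L.Nodup)
    {N lo hi m : ℕ} (hlo : N ≤ lo) (hhi : hi ≤ 2 * N) (h : m ≤ countIn L lo hi) :
    m ≤ ((Finset.Ioc N (2 * N)).filter Nat.Prime).card := by
  refine h.trans ?_
  have hnd' : (L.filter (fun p => decide (lo < p) && decide (p ≤ hi))).Nodup :=
    hnd.filter _
  rw [countIn, ← List.toFinset_card_of_nodup hnd']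
  apply Finset.card_le_card
  intro p hp
  rw [List.mem_toFinset, List.mem_filter] at hp
  obtain ⟨hpL, hcond⟩ := hp
  rw [Bool.and_eq_true, decide_eq_true_eq, decide_eq_true_eq] at hcond
  rw [Finset.mem_filter, Finset.mem_Ioc]
  exact ⟨⟨by omega, by omega⟩, hL p hpL⟩

theorem walk {L : List ℕ} (hL : ∀ p ∈ L, p.Prime) (hnd : L.Nodup) {m b N : ℕ} :
    ∀ (rest : List ℕ) (c : ℕ), bandOK L m b (c :: rest) = true → c ≤ N → N < b →
      m ≤ ((Finset.Ioc N (2 * N)).filter Nat.Prime).card := by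
  intro rest
  induction rest with
  | nil =>
    intro c hok hc hb
    rw [bandOK, Bool.and_eq_true, decide_eq_true_eq] at hok
    simp only [List.headD_nil] at hok
    exact countIn_le_card hL hnd (by omega) (by omega) hok.1
  | cons c1 rest' ih =>
    intro c hok hc hb
    rw [bandOK, Bool.and_eq_true, decide_eq_true_eq] at hok
    simp only [List.headD_cons] at hok
    rcases le_or_gt c1 N with h1 | h1
    · exact ih c1 hok.2 h1 hb
    · exact countIn_le_card hL hnd (by omega) (by omega) hok.1
def L5 : List ℕ := [37, 41, 43, 47, 53, 59, 61, 67, 71, 73, 79, 83, 89, 97, 101, 103, 107, 109, 113, 127]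
def cps5 : List ℕ := [32, 37, 41, 43, 47, 53, 59, 61]

theorem L5_prime : ∀ p ∈ L5, p.Prime := by
  have hcert : ∀ p ∈ L5, 2 ≤ p ∧ p ≤ 4096 ∧ ∀ m, 2 ≤ m → m ≤ 64 → m ∣ p → m = p := by decide
  intro p hp
  obtain ⟨h1, h2, h3⟩ := hcert p hp
  exact prime_of_cert h2 h1 h3

theorem L5_nodup : L5.Nodup :=
  ((List.isChain_iff_pairwise.mp (sortedLt_chain' L5 (by decide))).imp ne_of_lt)

theorem band5 (N : ℕ) (h1 : 2 ^ 5 ≤ N) (h2 : N < 2 ^ 6) :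
    6 ≤ ((Finset.Ioc N (2 * N)).filter Nat.Prime).card := by
  have hok : bandOK L5 6 (2 ^ 6) cps5 = true := by decide
  rw [show cps5 = 32 :: [37, 41, 43, 47, 53, 59, 61] from rfl] at hok
  exact walk L5_prime L5_nodup _ _ hok (by omega) (by omega)
def L6 : List ℕ := [67, 71, 73, 79, 83, 89, 97, 101, 103, 107, 109, 113, 127, 131, 137, 139, 149, 151, 157, 163, 167, 173, 179, 181, 191, 193, 197, 199, 211, 223, 227, 229, 233, 239, 241, 251]
def cps6 : List ℕ := [64, 67, 71, 73, 79, 83, 89, 97, 101, 103, 107, 109, 113, 127]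

theorem L6_prime : ∀ p ∈ L6, p.Prime := by
  have hcert : ∀ p ∈ L6, 2 ≤ p ∧ p ≤ 4096 ∧ ∀ m, 2 ≤ m → m ≤ 64 → m ∣ p → m = p := by decide
  intro p hp
  obtain ⟨h1, h2, h3⟩ := hcert p hp
  exact prime_of_cert h2 h1 h3

theorem L6_nodup : L6.Nodup :=
  ((List.isChain_iff_pairwise.mp (sortedLt_chain' L6 (by decide))).imp ne_of_lt)

theorem band6 (N : ℕ) (h1 : 2 ^ 6 ≤ N) (h2 : N < 2 ^ 7) :
    7 ≤ ((Finset.Ioc N (2 * N)).filter Nat.Prime).card := by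
  have hok : bandOK L6 7 (2 ^ 7) cps6 = true := by decide
  rw [show cps6 = 64 :: [67, 71, 73, 79, 83, 89, 97, 101, 103, 107, 109, 113, 127] from rfl] at hok
  exact walk L6_prime L6_nodup _ _ hok (by omega) (by omega)
def L7 : List ℕ := [131, 137, 139, 149, 151, 157, 163, 167, 173, 179, 181, 191, 193, 197, 199, 211, 223, 227, 229, 233, 239, 241, 251, 257, 263, 269, 271, 277, 281, 283, 293, 307, 311, 313, 317, 331, 337, 347, 349, 353, 359, 367, 373, 379, 383, 389, 397, 401, 409, 419, 421, 431, 433, 439, 443, 449, 457, 461, 463, 467, 479, 487, 491, 499, 503, 509]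
def cps7 : List ℕ := [128, 131, 137, 139, 149, 151, 157, 163, 167, 173, 179, 181, 191, 193, 197, 199, 211, 223, 227, 229, 233, 239, 241, 251]

theorem L7_prime : ∀ p ∈ L7, p.Prime := by
  have hcert : ∀ p ∈ L7, 2 ≤ p ∧ p ≤ 4096 ∧ ∀ m, 2 ≤ m → m ≤ 64 → m ∣ p → m = p := by decide
  intro p hp
  obtain ⟨h1, h2, h3⟩ := hcert p hp
  exact prime_of_cert h2 h1 h3

theorem L7_nodup : L7.Nodup :=
  ((List.isChain_iff_pairwise.mp (sortedLt_chain' L7 (by decide))).imp ne_of_lt)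

theorem band7 (N : ℕ) (h1 : 2 ^ 7 ≤ N) (h2 : N < 2 ^ 8) :
    8 ≤ ((Finset.Ioc N (2 * N)).filter Nat.Prime).card := by
  have hok : bandOK L7 8 (2 ^ 8) cps7 = true := by decide
  rw [show cps7 = 128 :: [131, 137, 139, 149, 151, 157, 163, 167, 173, 179, 181, 191, 193, 197, 199, 211, 223, 227, 229, 233, 239, 241, 251] from rfl] at hok
  exact walk L7_prime L7_nodup _ _ hok (by omega) (by omega)
def L8 : List ℕ := [257, 263, 269, 271, 277, 281, 283, 293, 307, 311, 313, 317, 331, 337, 347, 349, 353, 359, 367, 373, 379, 383, 389, 397, 401, 409, 419, 421, 431, 433, 439, 443, 449, 457, 461, 463, 467, 479, 487, 491, 499, 503, 509, 521, 523, 541, 547, 557, 563, 569, 571, 577, 587, 593, 599, 601, 607, 613, 617, 619, 631, 641, 643, 647, 653, 659, 661, 673, 677, 683, 691, 701, 709, 719, 727, 733, 739, 743, 751, 757, 761, 769, 773, 787, 797, 809, 811, 821, 823, 827, 829, 839, 853, 857, 859, 863, 877, 881, 883, 887, 907, 911, 919, 929, 937, 941, 947, 953, 967, 971, 977, 983, 991,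 997, 1009, 1013, 1019, 1021]
def cps8 : List ℕ := [256, 257, 263, 269, 271, 277, 281, 283, 293, 307, 311, 313, 317, 331, 337, 347, 349, 353, 359, 367, 373, 379, 383, 389, 397, 401, 409, 419, 421, 431, 433, 439, 443, 449, 457, 461, 463, 467, 479, 487, 491, 499, 503, 509]

theorem L8_prime : ∀ p ∈ L8, p.Prime := by
  have hcert : ∀ p ∈ L8, 2 ≤ p ∧ p ≤ 4096 ∧ ∀ m, 2 ≤ m → m ≤ 64 → m ∣ p → m = p := by decide
  intro p hp
  obtain ⟨h1, h2, h3⟩ := hcert p hp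
  exact prime_of_cert h2 h1 h3

theorem L8_nodup : L8.Nodup :=
  ((List.isChain_iff_pairwise.mp (sortedLt_chain' L8 (by decide))).imp ne_of_lt)

theorem band8 (N : ℕ) (h1 : 2 ^ 8 ≤ N) (h2 : N < 2 ^ 9) :
    9 ≤ ((Finset.Ioc N (2 * N)).filter Nat.Prime).card := by
  have hok : bandOK L8 9 (2 ^ 9) cps8 = true := by decide
  rw [show cps8 = 256 :: [257, 263, 269, 271, 277, 281, 283, 293, 307, 311, 313, 317, 331, 337, 347, 349, 353, 359, 367, 373, 379, 383, 389, 397, 401, 409, 419, 421, 431, 433, 439, 443, 449, 457, 461, 463, 467, 479, 487, 491, 499, 503, 509] from rfl] at hok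
  exact walk L8_prime L8_nodup _ _ hok (by omega) (by omega)
def L9 : List ℕ := [521, 523, 541, 547, 557, 563, 569, 571, 577, 587, 593, 599, 601, 607, 613, 617, 619, 631, 641, 643, 647, 653, 659, 661, 673, 677, 683, 691, 701, 709, 719, 727, 733, 739, 743, 751, 757, 761, 769, 773, 787, 797, 809, 811, 821, 823, 827, 829, 839, 853, 857, 859, 863, 877, 881, 883, 887, 907, 911, 919, 929, 937, 941, 947, 953, 967, 971, 977, 983, 991, 997, 1009, 1013, 1019, 1021, 1031, 1033, 1039, 1049, 1051, 1061, 1063, 1069, 1087, 1091, 1093, 1097, 1103, 1109, 1117, 1123, 1129, 1151, 1153, 1163, 1171, 1181, 1187, 1193, 1201, 1213, 1217, 1223, 1229, 1231, 1237, 1249, 1259, 1277, 1279, 1283, 1289, 1291, 1297, 1301, 1303, 1307, 1319, 1321, 1327, 1361, 1367, 1373, 1381, 1399, 1409, 1423, 1427, 1429, 1433, 1439, 1447, 1451, 1453, 1459, 1471, 1481, 1483, 1487, 1489, 1493, 1499, 1511, 1523, 1531, 1543, 1549, 1553, 1559, 1567, 1571, 1579, 1583, 1597, 1601, 1607, 1609,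 1613, 1619, 1621, 1627, 1637, 1657, 1663, 1667, 1669, 1693, 1697, 1699, 1709, 1721, 1723, 1733, 1741, 1747, 1753, 1759, 1777, 1783, 1787, 1789, 1801, 1811, 1823, 1831, 1847, 1861, 1867, 1871, 1873, 1877, 1879, 1889, 1901, 1907, 1913, 1931, 1933, 1949, 1951, 1973, 1979, 1987, 1993, 1997, 1999, 2003, 2011, 2017, 2027, 2029, 2039]
def cps9 : List ℕ := [512, 521, 523, 541, 547, 557, 563, 569, 571, 577, 587, 593, 599, 601, 607, 613, 617, 619, 631, 641, 643, 647, 653, 659, 661, 673, 677, 683, 691, 701, 709, 719, 727, 733, 739, 743, 751, 757, 761, 769, 773, 787, 797, 809, 811, 821, 823, 827, 829, 839, 853, 857, 859, 863, 877, 881, 883, 887, 907, 911, 919, 929, 937, 941, 947, 953, 967, 971, 977, 983, 991, 997, 1009, 1013, 1019, 1021]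

theorem L9_prime : ∀ p ∈ L9, p.Prime := by
  have hcert : ∀ p ∈ L9, 2 ≤ p ∧ p ≤ 4096 ∧ ∀ m, 2 ≤ m → m ≤ 64 → m ∣ p → m = p := by decide
  intro p hp
  obtain ⟨h1, h2, h3⟩ := hcert p hp
  exact prime_of_cert h2 h1 h3

theorem L9_nodup : L9.Nodup :=
  ((List.isChain_iff_pairwise.mp (sortedLt_chain' L9 (by decide))).imp ne_of_lt)

theorem band9 (N : ℕ) (h1 : 2 ^ 9 ≤ N) (h2 : N < 2 ^ 10) :
    10 ≤ ((Finset.Ioc N (2 * N)).filter Nat.Prime).card := by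
  have hok : bandOK L9 10 (2 ^ 10) cps9 = true := by decide
  rw [show cps9 = 512 :: [521, 523, 541, 547, 557, 563, 569, 571, 577, 587, 593, 599, 601, 607, 613, 617, 619, 631, 641, 643, 647, 653, 659, 661, 673, 677, 683, 691, 701, 709, 719, 727, 733, 739, 743, 751, 757, 761, 769, 773, 787, 797, 809, 811, 821, 823, 827, 829, 839, 853, 857, 859, 863, 877, 881, 883, 887, 907, 911, 919, 929, 937, 941, 947, 953, 967, 971, 977, 983, 991, 997, 1009, 1013, 1019, 1021] from rfl] at hok
  exact walk L9_prime L9_nodup _ _ hok (by omega) (by omega)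

theorem small_case {N n : ℕ} (hn : 5 ≤ n) (hpow : 2 ^ n ≤ N) (hN : N < 1024) :
    n + 1 ≤ ((Finset.Ioc N (2 * N)).filter Nat.Prime).card := by
  have h32 : 32 ≤ N := by
    calc (32:ℕ) = 2 ^ 5 := by norm_num
      _ ≤ 2 ^ n := Nat.pow_le_pow_right (by norm_num) hn
      _ ≤ N := hpow
  have key : ∀ j, 2 ^ n ≤ N → N < 2 ^ (j + 1) → n ≤ j := by
    intro j h1 h2
    have := (Nat.pow_lt_pow_iff_right (by norm_num : 1 < 2)).mp (lt_of_le_of_lt h1 h2)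
    omega
  rcases Nat.lt_or_ge N 64 with h | h
  · have hc := band5 N h32 h
    have := key 5 hpow (by norm_num; omega)
    omega
  rcases Nat.lt_or_ge N 128 with h' | h'
  · have hc := band6 N (by norm_num; omega) (by norm_num; omega)
    have := key 6 hpow (by norm_num; omega)
    omega
  rcases Nat.lt_or_ge N 256 with h'' | h''
  · have hc := band7 N (by norm_num; omega) (by norm_num; omega)
    have := key 7 hpow (by norm_num; omega)
    omega
  rcases Nat.lt_or_ge N 512 with h3 | h3
  · have hc := band8 N (by norm_num; omega) (by norm_num; omega)
    have := key 8 hpow (by norm_num; omega)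
    omega
  · have hc := band9 N (by norm_num; omega) (by norm_num; omega)
    have := key 9 hpow (by norm_num; omega)
    omega

/-- For `n ≥ 5` and real `x ≥ 2^n`, the interval `(x, 2x)` contains at least
`n + 1` primes. -/
theorem stmt_0 (n : ℕ) (hn : 5 ≤ n) (x : ℝ) (hx : (2 : ℝ) ^ n ≤ x) :
    n + 1 ≤ {p : ℕ | p.Prime ∧ x < (p : ℝ) ∧ (p : ℝ) < 2 * x}.ncard := by
  have hx0 : (0 : ℝ) ≤ x := le_trans (by positivity) hx
  set N := ⌊x⌋₊ with hNdef
  have hpow : 2 ^ n ≤ N := by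
    rw [hNdef]
    apply Nat.le_floor
    push_cast
    exact hx
  have h32 : 32 ≤ N := by
    calc (32:ℕ) = 2 ^ 5 := by norm_num
      _ ≤ 2 ^ n := Nat.pow_le_pow_right (by norm_num) hn
      _ ≤ N := hpow
  have hNx : (N : ℝ) ≤ x := Nat.floor_le hx0
  have hxN1 : x < N + 1 := Nat.lt_floor_add_one x
  have hK : n + 1 ≤ ((Finset.Ioc N (2 * N)).filter Nat.Prime).card := by
    rcases Nat.lt_or_ge N 1024 with h | h
    · exact small_case hn hpow h
    · exact large_case hn h hpow
  have hsub : (((Finset.Ioc N (2 * N)).filter Nat.Prime) : Set ℕ)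
      ⊆ {p : ℕ | p.Prime ∧ x < (p : ℝ) ∧ (p : ℝ) < 2 * x} := by
    intro p hp
    simp only [Finset.coe_filter, Finset.mem_Ioc, Set.mem_setOf_eq] at hp ⊢
    obtain ⟨⟨hp1, hp2⟩, hp3⟩ := hp
    refine ⟨hp3, ?_, ?_⟩
    · have : (N : ℝ) + 1 ≤ p := by exact_mod_cast hp1
      linarith
    · have hne : p ≠ 2 * N := by
        intro he
        have h2 : 2 ∣ p := ⟨N, he⟩
        have := (Nat.Prime.eq_one_or_self_of_dvd hp3 2 h2).resolve_left (by norm_num)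
        omega
      have hplt : p < 2 * N := by omega
      have : (p : ℝ) < 2 * N := by exact_mod_cast hplt
      linarith
  have hfin : {p : ℕ | p.Prime ∧ x < (p : ℝ) ∧ (p : ℝ) < 2 * x}.Finite := by
    apply Set.Finite.subset (Finset.range (2 * N + 2)).finite_toSet
    intro p hp
    simp only [Set.mem_setOf_eq] at hp
    simp only [Finset.coe_range, Set.mem_Iio]
    have : (p : ℝ) < 2 * (N + 1) := by linarith [hp.2.2]
    exact_mod_cast this
  calc n + 1 ≤ ((Finset.Ioc N (2 * N)).filter Nat.Prime).card := hK
    _ = (((Finset.Ioc N (2 * N)).filter Nat.Prime : Finset ℕ) : Set ℕ).ncard := by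
        rw [Set.ncard_coe_finset]
    _ ≤ _ := Set.ncard_le_ncard hsub hfin
end

section
/- For every integer n ≥ 2 there exist primes p_1 < p_2 < ... < p_n < p_{n+1} such that 1/p_1 + ... + 1/p_n < 1 < 1/p_1 + ... + 1/p_n + 1/p_{n+1}. -/
namespace Stmt3Aux
open Finset ArithmeticFunction Real Nat

lemma log_ge_sub_div (x : ℝ) (hx : 0 < x) : (x - 1)/x ≤ Real.log x := by
  have h := Real.log_le_sub_one_of_pos (show (0:ℝ) < 1/x by positivity)
  rw [Real.log_div one_ne_zero hx.ne', Real.log_one] at h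
  have hxx : x * x⁻¹ = 1 := mul_inv_cancel₀ hx.ne'
  have : 1/x - 1 ≤ -((x-1)/x) := by
    field_simp
    linarith
  linarith

lemma log_succ_sub (m : ℕ) (hm : 1 ≤ m) :
    (m:ℝ) * (Real.log (m+1) - Real.log m) ≤ 1 ∧
      1 ≤ ((m:ℝ)+1) * (Real.log (m+1) - Real.log m) := by
  have hmR : (1:ℝ) ≤ (m:ℝ) := by exact_mod_cast hm
  have hmpos : (0:ℝ) < m := by linarith
  have h1pos : (0:ℝ) < (m:ℝ)+1 := by linarith
  have hq : (0:ℝ) < ((m:ℝ)+1)/m := by positivity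
  have e : Real.log (((m:ℝ)+1)/m) = Real.log (m+1) - Real.log m :=
    Real.log_div h1pos.ne' hmpos.ne'
  constructor
  · have h := Real.log_le_sub_one_of_pos hq
    rw [e] at h
    have : ((m:ℝ)+1)/m - 1 = 1/m := by field_simp; ring
    rw [this] at h
    calc (m:ℝ) * (Real.log (m+1) - Real.log m) ≤ m * (1/m) := by
          apply mul_le_mul_of_nonneg_left h hmpos.le
      _ = 1 := by field_simp
  · have h := log_ge_sub_div (((m:ℝ)+1)/m) hq
    rw [e] at h
    have heq : (((m:ℝ)+1)/m - 1)/(((m:ℝ)+1)/m) = 1/((m:ℝ)+1) := by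
      field_simp
      ring
    rw [heq] at h
    calc (1:ℝ) = ((m:ℝ)+1) * (1/((m:ℝ)+1)) := by field_simp
      _ ≤ ((m:ℝ)+1) * (Real.log (m+1) - Real.log m) := by
          apply mul_le_mul_of_nonneg_left h h1pos.le

lemma log_factorial_bounds : ∀ n : ℕ, 1 ≤ n →
    (n:ℝ) * Real.log n - n + 1 ≤ Real.log (Nat.factorial n) ∧
      Real.log (Nat.factorial n) ≤ (n:ℝ) * Real.log n - n + 1 + Real.log n := by
  intro n hn
  induction n with
  | zero => omega
  | succ m ih =>
    rcases Nat.eq_or_lt_of_le hn with h | h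
    · simp [← h]
    · have hm : 1 ≤ m := by omega
      obtain ⟨ih1, ih2⟩ := ih hm
      obtain ⟨k1, k2⟩ := log_succ_sub m hm
      have hmR : (1:ℝ) ≤ (m:ℝ) := by exact_mod_cast hm
      have hfact : Real.log (Nat.factorial (m+1))
          = Real.log ((m:ℝ)+1) + Real.log (Nat.factorial m) := by
        rw [Nat.factorial_succ, Nat.cast_mul, Real.log_mul]
        · norm_num
        · positivity
        · exact_mod_cast (Nat.factorial_pos m).ne'
      have hcast : ((m+1 : ℕ) : ℝ) = (m:ℝ)+1 := by push_cast; ring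
      rw [hcast, hfact]
      constructor <;> nlinarith [ih1, ih2, k1, k2]


noncomputable def psi (n : ℕ) : ℝ := ∑ k ∈ Finset.Ioc 0 n, Λ k

lemma psi_nonneg (n : ℕ) : 0 ≤ psi n :=
  Finset.sum_nonneg fun _ _ => vonMangoldt_nonneg

lemma psi_mono {a b : ℕ} (h : a ≤ b) : psi a ≤ psi b :=
  Finset.sum_le_sum_of_subset_of_nonneg
    (Finset.Ioc_subset_Ioc le_rfl (by exact_mod_cast h))
    (fun _ _ _ => vonMangoldt_nonneg)

lemma divisors_eq_filter (n : ℕ) (hn : n ≠ 0) :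
    n.divisors = Finset.filter (· ∣ n) (Finset.Ioc 0 n) := by
  ext d
  simp only [Nat.mem_divisors, Finset.mem_filter, Finset.mem_Ioc]
  constructor
  · rintro ⟨hd, _⟩
    exact ⟨⟨Nat.pos_of_dvd_of_pos hd (Nat.pos_of_ne_zero hn),
      Nat.le_of_dvd (Nat.pos_of_ne_zero hn) hd⟩, hd⟩
  · rintro ⟨_, hd⟩; exact ⟨hd, hn⟩

/-- Chebyshev's identity:  `log n! = ∑_{k ≤ n} Λ(k) ⌊n/k⌋`. -/
lemma log_factorial_eq : ∀ n : ℕ,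
    Real.log (Nat.factorial n) = ∑ k ∈ Finset.Ioc 0 n, Λ k * ((n / k : ℕ) : ℝ) := by
  intro n
  induction n with
  | zero => simp
  | succ m ih =>
    have key : ∀ k ∈ Finset.Ioc 0 (m+1),
        Λ k * (((m+1) / k : ℕ) : ℝ)
          = Λ k * ((m / k : ℕ) : ℝ) + (if k ∣ m+1 then Λ k else 0) := by
      intro k _
      rw [Nat.succ_div]
      push_cast
      split <;> push_cast <;> ring
    rw [Finset.sum_congr rfl key, Finset.sum_add_distrib]
    have e1 : ∑ k ∈ Finset.Ioc 0 (m+1), Λ k * ((m / k : ℕ) : ℝ)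
        = ∑ k ∈ Finset.Ioc 0 m, Λ k * ((m / k : ℕ) : ℝ) := by
      rw [← Finset.sum_Ioc_consecutive _ (Nat.zero_le m) (Nat.le_succ m)]
      have : ∑ k ∈ Finset.Ioc m (m+1), Λ k * ((m / k : ℕ) : ℝ) = 0 := by
        rw [Finset.sum_Ioc_succ_top le_rfl, Finset.Ioc_self, Finset.sum_empty]
        rw [Nat.div_eq_of_lt (Nat.lt_succ_self m)]
        simp
      rw [this, add_zero]
    have e2 : ∑ k ∈ Finset.Ioc 0 (m+1), (if k ∣ m+1 then Λ k else 0)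
        = Real.log ((m+1 : ℕ) : ℝ) := by
      rw [← Finset.sum_filter]
      have hfil : Finset.filter (· ∣ m+1) (Finset.Ioc 0 (m+1)) = (m+1).divisors :=
        (divisors_eq_filter (m+1) (Nat.succ_ne_zero m)).symm
      rw [hfil, vonMangoldt_sum]
    rw [e1, e2, ← ih]
    have hfact : Real.log (Nat.factorial (m+1))
        = Real.log (((m+1:ℕ)) : ℝ) + Real.log (Nat.factorial m) := by
      rw [Nat.factorial_succ, Nat.cast_mul, Real.log_mul]
      · exact_mod_cast (Nat.succ_ne_zero m)
      · exact_mod_cast (Nat.factorial_pos m).ne'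
    rw [hfact]; ring

/-- log of floor-divided factorial as a sum over `Ioc 0 n`. -/
lemma log_factorial_div_eq (n j : ℕ) (hj : 1 ≤ j) :
    Real.log (Nat.factorial (n / j)) = ∑ k ∈ Finset.Ioc 0 n, Λ k * ((n / (j * k) : ℕ) : ℝ) := by
  rw [log_factorial_eq (n / j)]
  have hsub : Finset.Ioc 0 (n / j) ⊆ Finset.Ioc 0 n :=
    Finset.Ioc_subset_Ioc le_rfl (Nat.div_le_self n j)
  rw [Finset.sum_subset hsub]
  · apply Finset.sum_congr rfl
    intro k _
    rw [Nat.div_div_eq_div_mul]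
  · intro k hk hk'
    simp only [Finset.mem_Ioc] at hk hk'
    have hklarge : n / j < k := by omega
    rw [Nat.div_eq_of_lt hklarge]
    simp

/-- The Chebyshev combination. -/
noncomputable def cheb (n : ℕ) : ℝ :=
  Real.log (Nat.factorial n) - Real.log (Nat.factorial (n / 2))
    - Real.log (Nat.factorial (n / 3)) - Real.log (Nat.factorial (n / 5))
    + Real.log (Nat.factorial (n / 30))

lemma cheb_eq (n : ℕ) : cheb n = ∑ k ∈ Finset.Ioc 0 n,
    Λ k * (((n / k : ℕ) : ℝ) - ((n / (2 * k) : ℕ) : ℝ) - ((n / (3 * k) : ℕ) : ℝ)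
      - ((n / (5 * k) : ℕ) : ℝ) + ((n / (30 * k) : ℕ) : ℝ)) := by
  unfold cheb
  rw [log_factorial_eq n, log_factorial_div_eq n 2 (by norm_num),
    log_factorial_div_eq n 3 (by norm_num), log_factorial_div_eq n 5 (by norm_num),
    log_factorial_div_eq n 30 (by norm_num)]
  rw [← Finset.sum_sub_distrib, ← Finset.sum_sub_distrib, ← Finset.sum_sub_distrib,
    ← Finset.sum_add_distrib]
  apply Finset.sum_congr rfl
  intro k _
  ring

lemma combo_nonneg (a : ℕ) :
    (0:ℝ) ≤ (a:ℝ) - ((a / 2 : ℕ) : ℝ) - ((a / 3 : ℕ) : ℝ) - ((a / 5 : ℕ) : ℝ)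
      + ((a / 30 : ℕ) : ℝ) := by
  have h : a / 2 + a / 3 + a / 5 ≤ a + a / 30 := by omega
  have := (Nat.cast_le (α := ℝ)).2 h
  push_cast at this
  linarith

lemma combo_eq_one (a : ℕ) (h1 : 1 ≤ a) (h5 : a ≤ 5) :
    (a:ℝ) - ((a / 2 : ℕ) : ℝ) - ((a / 3 : ℕ) : ℝ) - ((a / 5 : ℕ) : ℝ)
      + ((a / 30 : ℕ) : ℝ) = 1 := by
  have h : a + a / 30 = a / 2 + a / 3 + a / 5 + 1 := by omega
  have := congrArg (fun z : ℕ => (z : ℝ)) h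
  push_cast at this
  linarith

/-- Key lower bound: `ψ(n) - ψ(n/6) ≤ cheb n`. -/
lemma psi_le_cheb (n : ℕ) : psi n - psi (n / 6) ≤ cheb n := by
  rw [cheb_eq]
  have hsplit : (∑ k ∈ Finset.Ioc 0 (n/6), Λ k * (((n / k : ℕ) : ℝ) - ((n / (2 * k) : ℕ) : ℝ)
        - ((n / (3 * k) : ℕ) : ℝ) - ((n / (5 * k) : ℕ) : ℝ) + ((n / (30 * k) : ℕ) : ℝ)))
      + (∑ k ∈ Finset.Ioc (n/6) n, Λ k * (((n / k : ℕ) : ℝ) - ((n / (2 * k) : ℕ) : ℝ)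
        - ((n / (3 * k) : ℕ) : ℝ) - ((n / (5 * k) : ℕ) : ℝ) + ((n / (30 * k) : ℕ) : ℝ)))
      = ∑ k ∈ Finset.Ioc 0 n, Λ k * (((n / k : ℕ) : ℝ) - ((n / (2 * k) : ℕ) : ℝ)
        - ((n / (3 * k) : ℕ) : ℝ) - ((n / (5 * k) : ℕ) : ℝ) + ((n / (30 * k) : ℕ) : ℝ)) :=
    Finset.sum_Ioc_consecutive _ (Nat.zero_le _) (Nat.div_le_self n 6)
  rw [← hsplit]
  have term_eq : ∀ k, k ∈ Finset.Ioc (n/6) n →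
      Λ k * (((n / k : ℕ) : ℝ) - ((n / (2 * k) : ℕ) : ℝ) - ((n / (3 * k) : ℕ) : ℝ)
        - ((n / (5 * k) : ℕ) : ℝ) + ((n / (30 * k) : ℕ) : ℝ)) = Λ k := by
    intro k hk
    simp only [Finset.mem_Ioc] at hk
    have hkpos : 0 < k := by
      have := Nat.zero_le (n/6); omega
    have h1 : 1 ≤ n / k := (Nat.one_le_div_iff hkpos).2 hk.2
    have h5 : n / k ≤ 5 := by
      by_contra hcon
      push_neg at hcon
      have h6 : 6 ≤ n / k := hcon
      have : 6 * k ≤ n := (Nat.le_div_iff_mul_le hkpos).1 h6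
      have : k ≤ n / 6 := (Nat.le_div_iff_mul_le (by norm_num)).2 (by omega)
      omega
    have e2 : n / (2 * k) = (n / k) / 2 := by
      rw [Nat.div_div_eq_div_mul, Nat.mul_comm]
    have e3 : n / (3 * k) = (n / k) / 3 := by
      rw [Nat.div_div_eq_div_mul, Nat.mul_comm]
    have e5 : n / (5 * k) = (n / k) / 5 := by
      rw [Nat.div_div_eq_div_mul, Nat.mul_comm]
    have e30 : n / (30 * k) = (n / k) / 30 := by
      rw [Nat.div_div_eq_div_mul, Nat.mul_comm]
    rw [e2, e3, e5, e30, combo_eq_one (n/k) h1 h5, mul_one]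
  rw [Finset.sum_congr rfl term_eq]
  have first_nonneg : 0 ≤ ∑ k ∈ Finset.Ioc 0 (n/6), Λ k * (((n / k : ℕ) : ℝ)
      - ((n / (2 * k) : ℕ) : ℝ) - ((n / (3 * k) : ℕ) : ℝ) - ((n / (5 * k) : ℕ) : ℝ)
      + ((n / (30 * k) : ℕ) : ℝ)) := by
    apply Finset.sum_nonneg
    intro k _
    apply mul_nonneg vonMangoldt_nonneg
    have e2 : n / (2 * k) = (n / k) / 2 := by rw [Nat.div_div_eq_div_mul, Nat.mul_comm]
    have e3 : n / (3 * k) = (n / k) / 3 := by rw [Nat.div_div_eq_div_mul, Nat.mul_comm]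
    have e5 : n / (5 * k) = (n / k) / 5 := by rw [Nat.div_div_eq_div_mul, Nat.mul_comm]
    have e30 : n / (30 * k) = (n / k) / 30 := by rw [Nat.div_div_eq_div_mul, Nat.mul_comm]
    rw [e2, e3, e5, e30]
    exact combo_nonneg (n/k)
  have hpsi : psi n - psi (n/6) = ∑ k ∈ Finset.Ioc (n/6) n, Λ k := by
    unfold psi
    rw [← Finset.sum_Ioc_consecutive _ (Nat.zero_le (n/6)) (Nat.div_le_self n 6)]
    ring
  rw [hpsi]
  linarith


noncomputable def Aconst : ℝ :=
  Real.log 2 / 2 + Real.log 3 / 3 + Real.log 5 / 5 - Real.log 30 / 30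

lemma fC1 (x y : ℝ) (hx : 0 < x) (hxy : x ≤ y) (hyx : y ≤ x + 1) (hy1 : 1 ≤ y) :
    y * Real.log y - y ≤ x * Real.log x - x + Real.log y := by
  have hy : 0 < y := by linarith
  have hq : 0 < y / x := by positivity
  have h := Real.log_le_sub_one_of_pos hq
  rw [Real.log_div hy.ne' hx.ne'] at h
  have hlogy : 0 ≤ Real.log y := Real.log_nonneg hy1
  have hx' : x * (Real.log y - Real.log x) ≤ x * (y/x - 1) :=
    mul_le_mul_of_nonneg_left h hx.le
  have : x * (y/x - 1) = y - x := by field_simp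
  rw [this] at hx'
  nlinarith [mul_le_mul_of_nonneg_right (show y - x ≤ 1 by linarith) hlogy]

lemma fC2 (x y : ℝ) (hx : 1 ≤ x) (hxy : x ≤ y) :
    x * Real.log x - x ≤ y * Real.log y - y := by
  have hx0 : 0 < x := by linarith
  have hy0 : 0 < y := by linarith
  have h := log_ge_sub_div (y/x) (by positivity)
  rw [Real.log_div hy0.ne' hx0.ne'] at h
  have heq : (y/x - 1)/(y/x) = (y - x)/y := by
    field_simp
  rw [heq] at h
  have h2 : y - x ≤ y * (Real.log y - Real.log x) := by
    have := mul_le_mul_of_nonneg_left h hy0.le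
    calc y - x = y * ((y-x)/y) := by field_simp
      _ ≤ y * (Real.log y - Real.log x) := this
  have hlogx : 0 ≤ Real.log x := Real.log_nonneg hx
  nlinarith [mul_le_mul_of_nonneg_right (show 0 ≤ y - x by linarith) hlogx]

set_option maxHeartbeats 2000000 in
lemma cheb_ub (n : ℕ) (hn : 30 ≤ n) :
    cheb n ≤ Aconst * n + 5 * Real.log n + 1 := by
  have hn1 : 1 ≤ n := by omega
  set N := (n:ℝ) with hNdef
  have hN : (30:ℝ) ≤ N := by rw [hNdef]; exact_mod_cast hn
  have hN0 : (0:ℝ) < N := by linarith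
  -- the floor divisions
  have div_facts : ∀ j : ℕ, 1 ≤ j → j ≤ 30 →
      ((n / j : ℕ) : ℝ) ≤ N / j ∧ N / j - 1 < ((n / j : ℕ) : ℝ) ∧ (1:ℝ) ≤ ((n / j : ℕ) : ℝ) := by
    intro j hj hj30
    have hjR : (0:ℝ) < (j:ℝ) := by exact_mod_cast hj
    refine ⟨Nat.cast_div_le, ?_, ?_⟩
    · have hmod := Nat.div_add_mod n j
      have hmodlt : n % j < j := Nat.mod_lt n (by omega)
      have : (j:ℝ) * ((n / j : ℕ) : ℝ) + ((n % j : ℕ) : ℝ) = N := by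
        rw [hNdef]; exact_mod_cast hmod
      have hr : ((n % j : ℕ) : ℝ) < j := by exact_mod_cast hmodlt
      rw [div_sub_one hjR.ne', div_lt_iff₀ hjR]  -- (N - j)/j < a
      nlinarith
    · have : 1 ≤ n / j := (Nat.one_le_div_iff (by omega)).2 (by omega)
      exact_mod_cast this
  obtain ⟨h2le, h2gt, h2one⟩ := div_facts 2 (by norm_num) (by norm_num)
  obtain ⟨h3le, h3gt, h3one⟩ := div_facts 3 (by norm_num) (by norm_num)
  obtain ⟨h5le, h5gt, h5one⟩ := div_facts 5 (by norm_num) (by norm_num)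
  obtain ⟨h30le, h30gt, h30one⟩ := div_facts 30 (by norm_num) (by norm_num)
  -- log-factorial bounds
  obtain ⟨hTn_lb, hTn_ub⟩ := log_factorial_bounds n hn1
  have hfle : ∀ j : ℕ, 1 ≤ j → j ≤ 30 → 1 ≤ n / j := by
    intro j hj hj30
    exact (Nat.one_le_div_iff (by omega)).2 (by omega)
  obtain ⟨hT2_lb, _⟩ := log_factorial_bounds (n/2) (hfle 2 (by norm_num) (by norm_num))
  obtain ⟨hT3_lb, _⟩ := log_factorial_bounds (n/3) (hfle 3 (by norm_num) (by norm_num))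
  obtain ⟨hT5_lb, _⟩ := log_factorial_bounds (n/5) (hfle 5 (by norm_num) (by norm_num))
  obtain ⟨_, hT30_ub⟩ := log_factorial_bounds (n/30) (hfle 30 (by norm_num) (by norm_num))
  -- f-comparisons
  have hf2 : N/2 * Real.log (N/2) - N/2
      ≤ ((n/2:ℕ):ℝ) * Real.log ((n/2:ℕ):ℝ) - ((n/2:ℕ):ℝ) + Real.log (N/2) :=
    fC1 _ _ (by linarith) h2le (by linarith) (by linarith)
  have hf3 : N/3 * Real.log (N/3) - N/3
      ≤ ((n/3:ℕ):ℝ) * Real.log ((n/3:ℕ):ℝ) - ((n/3:ℕ):ℝ) + Real.log (N/3) :=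
    fC1 _ _ (by linarith) h3le (by linarith) (by linarith)
  have hf5 : N/5 * Real.log (N/5) - N/5
      ≤ ((n/5:ℕ):ℝ) * Real.log ((n/5:ℕ):ℝ) - ((n/5:ℕ):ℝ) + Real.log (N/5) :=
    fC1 _ _ (by linarith) h5le (by linarith) (by linarith)
  have hf30 : ((n/30:ℕ):ℝ) * Real.log ((n/30:ℕ):ℝ) - ((n/30:ℕ):ℝ)
      ≤ N/30 * Real.log (N/30) - N/30 :=
    fC2 _ _ h30one h30le
  -- log monotonicity facts
  have hlog2 : Real.log (N/2) ≤ Real.log N :=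
    Real.log_le_log (by linarith) (by linarith)
  have hlog3 : Real.log (N/3) ≤ Real.log N :=
    Real.log_le_log (by linarith) (by linarith)
  have hlog5 : Real.log (N/5) ≤ Real.log N :=
    Real.log_le_log (by linarith) (by linarith)
  have hlog30' : Real.log ((n/30:ℕ):ℝ) ≤ Real.log N :=
    Real.log_le_log (by linarith) (by nlinarith)
  -- the exact combination identity
  have hcombo : N * Real.log N - N - (N/2 * Real.log (N/2) - N/2)
      - (N/3 * Real.log (N/3) - N/3) - (N/5 * Real.log (N/5) - N/5)
      + (N/30 * Real.log (N/30) - N/30) = Aconst * N := by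
    rw [Real.log_div hN0.ne' (by norm_num), Real.log_div hN0.ne' (by norm_num),
      Real.log_div hN0.ne' (by norm_num), Real.log_div hN0.ne' (by norm_num)]
    unfold Aconst
    ring
  have hlogN_nonneg : 0 ≤ Real.log N := Real.log_nonneg (by linarith)
  unfold cheb
  nlinarith [hTn_ub, hT2_lb, hT3_lb, hT5_lb, hT30_ub, hf2, hf3, hf5, hf30, hcombo,
    hlog2, hlog3, hlog5, hlog30']


lemma l3_lb : (1.0974:ℝ) < Real.log 3 := by
  have h : ((2:ℝ))^(19:ℕ) ≤ 3^(12:ℕ) := by norm_num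
  have h2 := Real.log_le_log (by positivity) h
  rw [Real.log_pow, Real.log_pow] at h2
  push_cast at h2
  nlinarith [Real.log_two_gt_d9]

lemma l3_ub : Real.log 3 < 1.0989 := by
  have h : ((3:ℝ))^(41:ℕ) ≤ 2^(65:ℕ) := by norm_num
  have h2 := Real.log_le_log (by positivity) h
  rw [Real.log_pow, Real.log_pow] at h2
  push_cast at h2
  nlinarith [Real.log_two_lt_d9]

lemma l5_lb : (1.5843:ℝ) < Real.log 5 := by
  have h : ((2:ℝ))^(16:ℕ) ≤ 5^(7:ℕ) := by norm_num
  have h2 := Real.log_le_log (by positivity) h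
  rw [Real.log_pow, Real.log_pow] at h2
  push_cast at h2
  nlinarith [Real.log_two_gt_d9]

lemma l5_ub : Real.log 5 < 1.6174 := by
  have h : ((5:ℝ))^(3:ℕ) ≤ 2^(7:ℕ) := by norm_num
  have h2 := Real.log_le_log (by positivity) h
  rw [Real.log_pow, Real.log_pow] at h2
  push_cast at h2
  nlinarith [Real.log_two_lt_d9]

lemma l30_eq : Real.log 30 = Real.log 2 + Real.log 3 + Real.log 5 := by
  have : (30:ℝ) = 2 * 3 * 5 := by norm_num
  rw [this, Real.log_mul (by norm_num) (by norm_num), Real.log_mul (by norm_num) (by norm_num)]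

lemma l6_eq : Real.log 6 = Real.log 2 + Real.log 3 := by
  have : (6:ℝ) = 2 * 3 := by norm_num
  rw [this, Real.log_mul (by norm_num) (by norm_num)]

lemma A_nonneg : 0 ≤ Aconst := by
  have h2 : (0:ℝ) ≤ Real.log 2 := Real.log_nonneg (by norm_num)
  have h3 : (0:ℝ) ≤ Real.log 3 := Real.log_nonneg (by norm_num)
  have h5 : (0:ℝ) ≤ Real.log 5 := Real.log_nonneg (by norm_num)
  unfold Aconst
  rw [l30_eq]
  linarith

lemma A_ub : Aconst < 0.9239 := by
  unfold Aconst
  rw [l30_eq]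
  nlinarith [l3_ub, l5_ub, Real.log_two_lt_d9, l3_lb, l5_lb, Real.log_two_gt_d9]

lemma psi29 : psi 29 ≤ 101 := by
  unfold psi
  have h1 : ∀ k ∈ Finset.Ioc 0 29, Λ k ≤ Real.log 32 := by
    intro k hk
    simp only [Finset.mem_Ioc] at hk
    calc Λ k ≤ Real.log k := vonMangoldt_le_log
      _ ≤ Real.log 32 := by
          apply Real.log_le_log (by exact_mod_cast hk.1)
          exact_mod_cast (by omega : k ≤ 32)
  calc ∑ k ∈ Finset.Ioc 0 29, Λ k ≤ ∑ _k ∈ Finset.Ioc 0 29, Real.log 32 :=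
        Finset.sum_le_sum h1
    _ = 29 * Real.log 32 := by
        rw [Finset.sum_const, Nat.card_Ioc]
        norm_num
    _ ≤ 101 := by
        have : Real.log 32 = 5 * Real.log 2 := by
          have : (32:ℝ) = 2^(5:ℕ) := by norm_num
          rw [this, Real.log_pow]; push_cast; ring
        rw [this]
        nlinarith [Real.log_two_lt_d9]

set_option maxHeartbeats 1000000 in
lemma psi_ub : ∀ n : ℕ, psi n ≤ 6/5 * Aconst * n + 8*(Real.log n + 1)^2 + 101 := by
  intro n
  induction n using Nat.strong_induction_on with
  | _ n ih =>
    rcases lt_or_ge n 30 with h | h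
    · have hm : psi n ≤ psi 29 := psi_mono (by omega)
      have h29 := psi29
      have hA := A_nonneg
      have hsq : (0:ℝ) ≤ (Real.log n + 1)^2 := sq_nonneg _
      have hc : (0:ℝ) ≤ (n:ℝ) := Nat.cast_nonneg n
      nlinarith
    · have key := psi_le_cheb n
      have hEub := cheb_ub n h
      have ih6 := ih (n/6) (by omega)
      have hcast6 : ((n/6:ℕ):ℝ) ≤ (n:ℝ)/6 := Nat.cast_div_le
      have h6one : 1 ≤ n/6 := by omega
      have h6oneR : (1:ℝ) ≤ ((n/6:ℕ):ℝ) := by exact_mod_cast h6one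
      have hN0 : (0:ℝ) < (n:ℝ) := by
        have : (30:ℝ) ≤ (n:ℝ) := by exact_mod_cast h
        linarith
      have hlogmono : Real.log ((n/6:ℕ):ℝ) ≤ Real.log ((n:ℝ)/6) :=
        Real.log_le_log (by linarith) hcast6
      have hlog6eq : Real.log ((n:ℝ)/6) = Real.log n - Real.log 6 :=
        Real.log_div hN0.ne' (by norm_num)
      have hlog6nn : 0 ≤ Real.log ((n/6:ℕ):ℝ) := Real.log_nonneg h6oneR
      have hsq : (Real.log ((n/6:ℕ):ℝ) + 1)^2 ≤ (Real.log n - Real.log 6 + 1)^2 := by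
        apply pow_le_pow_left₀ (by linarith)
        rw [← hlog6eq]; linarith
      have hA := A_nonneg
      have hstep : 6/5 * Aconst * ((n/6:ℕ):ℝ) ≤ 6/5 * Aconst * ((n:ℝ)/6) := by
        apply mul_le_mul_of_nonneg_left hcast6 (by linarith)
      have hl6 : Real.log 6 = Real.log 2 + Real.log 3 := l6_eq
      have hL : (0:ℝ) ≤ Real.log n := Real.log_nonneg (by linarith)
      have l2a := Real.log_two_gt_d9
      have l2b := Real.log_two_lt_d9
      have l3a := l3_lb
      have l3b := l3_ub
      nlinarith [key, hEub, ih6, hsq, hstep]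


section Binom

lemma three_pow_le (n : ℕ) :
    3^(3*n) ≤ (3*n+1) * ((3*n).choose n * 4^n) := by
  set t : ℕ → ℕ := fun k => (3*n).choose k * 2^k with ht
  have hrec : ∀ k, t (k+1) * (k+1) = t k * (2*(3*n - k)) := by
    intro k
    have : t (k+1) * (k+1) = ((3*n).choose (k+1) * (k+1)) * 2^(k+1) := by
      simp only [ht]; ring
    rw [this, Nat.choose_succ_right_eq]
    simp only [ht]; ring
  have asc : ∀ k, k < 2*n → t k ≤ t (k+1) := by
    intro k hk
    apply Nat.le_of_mul_le_mul_right _ (show 0 < k+1 by omega)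
    rw [hrec k]
    exact Nat.mul_le_mul_left _ (by omega)
  have desc : ∀ k, 2*n ≤ k → t (k+1) ≤ t k := by
    intro k hk
    apply Nat.le_of_mul_le_mul_right _ (show 0 < k+1 by omega)
    rw [hrec k]
    exact Nat.mul_le_mul_left _ (by omega)
  have up : ∀ d k, k + d = 2*n → t k ≤ t (2*n) := by
    intro d
    induction d with
    | zero => intro k hk; simp only [Nat.add_zero] at hk; rw [hk]
    | succ d ihd =>
      intro k hk
      exact le_trans (asc k (by omega)) (ihd (k+1) (by omega))
  have down : ∀ d, t (2*n + d) ≤ t (2*n) := by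
    intro d
    induction d with
    | zero => exact le_refl _
    | succ d ihd =>
      have := desc (2*n + d) (by omega)
      calc t (2*n + (d+1)) = t ((2*n + d) + 1) := by ring_nf
        _ ≤ t (2*n + d) := this
        _ ≤ t (2*n) := ihd
  have tmax : ∀ k, t k ≤ t (2*n) := by
    intro k
    rcases le_or_gt k (2*n) with hk | hk
    · exact up (2*n - k) k (by omega)
    · have : k = 2*n + (k - 2*n) := by omega
      rw [this]; exact down _
  have hpow : (3:ℕ)^(3*n) = ∑ k ∈ Finset.range (3*n+1), (3*n).choose k * 2^k := by
    have h := add_pow 2 1 (3*n)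
    norm_num at h
    rw [h]
    apply Finset.sum_congr rfl
    intro k _
    ring
  have hsum : ∑ k ∈ Finset.range (3*n+1), t k ≤ (3*n+1) * t (2*n) := by
    calc ∑ k ∈ Finset.range (3*n+1), t k ≤ (Finset.range (3*n+1)).card • t (2*n) :=
          Finset.sum_le_card_nsmul _ _ _ (fun k _ => tmax k)
      _ = (3*n+1) * t (2*n) := by rw [Finset.card_range, smul_eq_mul]
  have ht2n : t (2*n) = (3*n).choose n * 4^n := by
    have h1 : (3*n).choose (2*n) = (3*n).choose n := by
      have := Nat.choose_symm (show n ≤ 3*n by omega)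
      have h2 : 3*n - n = 2*n := by omega
      rw [h2] at this
      exact this
    simp only [ht]
    rw [h1]
    have : (4:ℕ)^n = 2^(2*n) := by
      rw [show (4:ℕ) = 2^2 by norm_num, ← pow_mul]
    rw [this]
  rw [hpow]
  calc ∑ k ∈ Finset.range (3*n+1), (3*n).choose k * 2^k
      = ∑ k ∈ Finset.range (3*n+1), t k := rfl
    _ ≤ (3*n+1) * t (2*n) := hsum
    _ = (3*n+1) * ((3*n).choose n * 4^n) := by rw [ht2n]

end Binom


lemma factorization_middle_zero (n p : ℕ) (hn : 2 ≤ n) (hp : p.Prime)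
    (h1 : 3*n < 2*p) (h2 : p ≤ 2*n) : ((3*n).choose n).factorization p = 0 := by
  haveI := Fact.mk hp
  have hp2 : 2 ≤ p := hp.two_le
  have hsq : 3*n < p^2 := by nlinarith
  have hnp : n < p := by omega
  have hIco : Finset.Ico 1 2 = {1} := by decide
  have e3 : ((3*n).factorial).factorization p = 1 := by
    rw [Nat.factorization_def _ hp, padicValNat_factorial (b := 2)
      (Nat.log_lt_of_lt_pow (by omega) hsq)]
    rw [hIco, Finset.sum_singleton, pow_one]
    exact Nat.div_eq_of_lt_le (by omega) (by omega)
  have e2 : ((2*n).factorial).factorization p = 1 := by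
    rw [Nat.factorization_def _ hp, padicValNat_factorial (b := 2)
      (Nat.log_lt_of_lt_pow (by omega) (by omega))]
    rw [hIco, Finset.sum_singleton, pow_one]
    exact Nat.div_eq_of_lt_le (by omega) (by omega)
  have e1 : (n.factorial).factorization p = 0 :=
    Nat.factorization_factorial_eq_zero_of_lt hnp
  have hchoose : (3*n).choose n * n.factorial * (2*n).factorial = (3*n).factorial := by
    have := Nat.choose_mul_factorial_mul_factorial (show n ≤ 3*n by omega)
    have h2n : 3*n - n = 2*n := by omega
    rw [h2n] at this
    exact this
  have hfac : ((3*n).factorial).factorization p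
      = ((3*n).choose n).factorization p + (n.factorial).factorization p
        + ((2*n).factorial).factorization p := by
    rw [← hchoose, Nat.factorization_mul
        (Nat.mul_ne_zero (Nat.choose_pos (show n ≤ 3*n by omega)).ne' (Nat.factorial_ne_zero _))
        (Nat.factorial_ne_zero _),
      Nat.factorization_mul ((Nat.choose_pos (show n ≤ 3*n by omega)).ne')
        (Nat.factorial_ne_zero _)]
    simp
  omega


set_option maxHeartbeats 1000000 in
lemma choose_ub (n : ℕ) (hn : 2 ≤ n)
    (no_prime : ¬∃ p, p.Prime ∧ 2*n < p ∧ p ≤ 3*n) :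
    (3*n).choose n ≤ (3*n)^(Nat.sqrt (3*n))
      * ∏ p ∈ (Finset.range ((3*n)/2+1)).filter Nat.Prime, p := by
  have n_pos : 0 < 3*n := by omega
  set S := (Finset.range (3*n+1)).filter Nat.Prime with hS
  set f : ℕ → ℕ := fun x => x ^ ((3*n).choose n).factorization x with hf
  have hprodS : ∏ x ∈ S, f x = ∏ x ∈ Finset.range (3*n+1), f x := by
    refine Finset.prod_filter_of_ne fun p _ h => ?_
    contrapose! h
    simp only [hf]
    rw [Nat.factorization_eq_zero_of_not_prime _ h, pow_zero]
  have hchoose_eq : (3*n).choose n = ∏ x ∈ S, f x := by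
    rw [hprodS]
    exact (Nat.prod_pow_factorization_choose (3*n) n (by omega)).symm
  rw [hchoose_eq, ← Finset.prod_filter_mul_prod_filter_not S (· ≤ Nat.sqrt (3*n))]
  apply Nat.mul_le_mul
  · -- small primes
    refine (Finset.prod_le_prod' fun p _ => (?_ : f p ≤ 3*n)).trans ?_
    · exact Nat.pow_factorization_choose_le n_pos
    · have hcard : (Finset.Icc 1 (Nat.sqrt (3*n))).card = Nat.sqrt (3*n) := by
        rw [Nat.card_Icc, Nat.add_sub_cancel]
      rw [Finset.prod_const]
      refine pow_le_pow_right₀ (by omega) ((Finset.card_le_card fun x hx => ?_).trans hcard.le)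
      obtain ⟨h1, h2⟩ := Finset.mem_filter.1 hx
      exact Finset.mem_Icc.mpr ⟨(Finset.mem_filter.1 h1).2.one_lt.le, h2⟩
  · -- large primes
    have step1 : ∀ p ∈ S.filter (fun p => ¬ p ≤ Nat.sqrt (3*n)),
        f p ≤ (if 2*p ≤ 3*n then p else 1) := by
      intro p hp
      obtain ⟨hpS, hpbig⟩ := Finset.mem_filter.1 hp
      obtain ⟨hprange, hpprime⟩ := Finset.mem_filter.1 hpS
      rw [Finset.mem_range] at hprange
      have hple : p ≤ 3*n := by omega
      have hp2 : 3*n < p^2 := Nat.sqrt_lt'.mp (not_le.1 hpbig)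
      by_cases hcase : 2*p ≤ 3*n
      · simp only [if_pos hcase, hf]
        calc p ^ ((3*n).choose n).factorization p ≤ p^1 :=
              Nat.pow_le_pow_right hpprime.one_lt.le
                (Nat.factorization_choose_le_one hp2)
          _ = p := pow_one p
      · simp only [if_neg hcase]
        push_neg at hcase
        rcases le_or_gt p (2*n) with hp2n | hp2n
        · simp only [hf]
          rw [factorization_middle_zero n p hn hpprime hcase hp2n, pow_zero]
        · exact absurd ⟨p, hpprime, hp2n, hple⟩ no_prime
    calc ∏ p ∈ S.filter (fun p => ¬ p ≤ Nat.sqrt (3*n)), f p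
        ≤ ∏ p ∈ S.filter (fun p => ¬ p ≤ Nat.sqrt (3*n)), (if 2*p ≤ 3*n then p else 1) :=
          Finset.prod_le_prod' step1
      _ = ∏ p ∈ (S.filter (fun p => ¬ p ≤ Nat.sqrt (3*n))).filter (fun p => 2*p ≤ 3*n), p :=
          (Finset.prod_filter _ _).symm
      _ ≤ ∏ p ∈ (Finset.range ((3*n)/2+1)).filter Nat.Prime, p := by
          apply Finset.prod_le_prod_of_subset_of_one_le'
          · intro p hp
            obtain ⟨hp1, hp2⟩ := Finset.mem_filter.1 hp
            obtain ⟨hpS, _⟩ := Finset.mem_filter.1 hp1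
            obtain ⟨_, hpprime⟩ := Finset.mem_filter.1 hpS
            refine Finset.mem_filter.2 ⟨Finset.mem_range.2 ?_, hpprime⟩
            have : p ≤ (3*n)/2 := (Nat.le_div_iff_mul_le (by norm_num)).2 (by omega)
            omega
          · intro p hp _
            exact ((Finset.mem_filter.1 hp).2).one_lt.le


lemma primorial_le_exp_psi (m : ℕ) :
    ((∏ p ∈ (Finset.range (m+1)).filter Nat.Prime, p : ℕ) : ℝ) ≤ Real.exp (psi m) := by
  set P := (Finset.range (m+1)).filter Nat.Prime with hP
  have hpos : 0 < ∏ p ∈ P, p :=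
    Finset.prod_pos fun p hp => (Finset.mem_filter.1 hp).2.pos
  have hposR : (0:ℝ) < ((∏ p ∈ P, p : ℕ) : ℝ) := by exact_mod_cast hpos
  rw [← Real.exp_log hposR]
  apply Real.exp_le_exp.2
  have hcast : ((∏ p ∈ P, p : ℕ) : ℝ) = ∏ p ∈ P, (p:ℝ) := by push_cast; rfl
  rw [hcast, Real.log_prod (fun p hp => by
    exact_mod_cast ((Finset.mem_filter.1 hp).2.pos.ne'))]
  have heq : ∀ p ∈ P, Real.log (p:ℝ) = Λ p := by
    intro p hp
    exact (vonMangoldt_apply_prime (Finset.mem_filter.1 hp).2).symm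
  rw [Finset.sum_congr rfl heq]
  apply Finset.sum_le_sum_of_subset_of_nonneg
  · intro p hp
    obtain ⟨hpr, hpp⟩ := Finset.mem_filter.1 hp
    rw [Finset.mem_range] at hpr
    exact Finset.mem_Ioc.2 ⟨hpp.pos, by omega⟩
  · exact fun _ _ _ => vonMangoldt_nonneg

set_option maxHeartbeats 2000000 in
lemma primeInGap (n : ℕ) (h : 300000 ≤ n) : ∃ p, p.Prime ∧ 2*n < p ∧ p ≤ 3*n := by
  by_contra no_prime
  have hn2 : 2 ≤ n := by omega
  have H1 := three_pow_le n
  have H2 := choose_ub n hn2 no_prime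
  set x : ℝ := ((3*n : ℕ) : ℝ) with hx
  have hx9 : (900000:ℝ) ≤ x := by rw [hx]; exact_mod_cast (by omega : 900000 ≤ 3*n)
  have hx0 : (0:ℝ) < x := by linarith
  set L : ℝ := Real.log x with hL
  have hL0 : 0 ≤ L := Real.log_nonneg (by linarith)
  -- u = x^(1/14)
  set u : ℝ := Real.exp (L / 14) with hu
  have hu0 : (0:ℝ) < u := Real.exp_pos _
  have hu1 : (1:ℝ) ≤ u := Real.one_le_exp (by positivity)
  have hu14 : u^14 = x := by
    rw [hu, ← Real.exp_nat_mul]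
    have : (14:ℕ) * (L/14) = L := by push_cast; ring
    rw [this, hL, Real.exp_log hx0]
  have hLu : L ≤ 14*u - 14 := by
    have := Real.add_one_le_exp (L/14)
    rw [← hu] at this
    linarith
  have hsqrt : Real.sqrt x = u^7 := by
    rw [show x = (u^7)^2 by rw [← pow_mul]; exact hu14.symm]
    exact Real.sqrt_sq (by positivity)
  -- power certificates
  have cert1 : (350:ℝ) ≤ u^6 := by
    apply le_of_pow_le_pow_left₀ (n := 7) (by norm_num) (by positivity)
    have : (u^6)^7 = x^3 := by rw [← pow_mul, ← hu14, ← pow_mul]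
    rw [this]
    calc (350:ℝ)^7 ≤ 900000^3 := by norm_num
      _ ≤ x^3 := by gcongr
  have cert2 : (120000:ℝ) ≤ u^12 := by
    apply le_of_pow_le_pow_left₀ (n := 7) (by norm_num) (by positivity)
    have : (u^12)^7 = x^6 := by rw [← pow_mul, ← hu14, ← pow_mul]
    rw [this]
    calc (120000:ℝ)^7 ≤ 900000^6 := by norm_num
      _ ≤ x^6 := by gcongr
  have cert3 : (56000:ℝ) ≤ u^13 := by
    apply le_of_pow_le_pow_left₀ (n := 14) (by norm_num) (by positivity)
    have : (u^13)^14 = x^13 := by rw [← pow_mul, ← hu14, ← pow_mul]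
    rw [this]
    calc (56000:ℝ)^14 ≤ 900000^13 := by norm_num
      _ ≤ x^13 := by gcongr
  -- B1 : sqrt x * L ≤ x / 25
  have B1 : Real.sqrt x * L ≤ x/25 := by
    have h1 : Real.sqrt x * L ≤ u^7 * (14*u) := by
      rw [hsqrt]
      apply mul_le_mul_of_nonneg_left (by linarith) (by positivity)
    have h2 : (350:ℝ) * u^8 ≤ u^6 * u^8 :=
      mul_le_mul_of_nonneg_right cert1 (by positivity)
    have h3 : u^6 * u^8 = x := by rw [← hu14]; ring
    nlinarith
  -- B2 : 8*(L+1)^2 ≤ 3*x/200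
  have B2 : 8*(L+1)^2 ≤ 3*x/200 := by
    have hL15 : L + 1 ≤ 15*u := by nlinarith
    have h1 : (L+1)^2 ≤ (15*u)^2 := by
      apply pow_le_pow_left₀ (by linarith) hL15
    have h2 : (120000:ℝ) * u^2 ≤ u^12 * u^2 :=
      mul_le_mul_of_nonneg_right cert2 (by positivity)
    have h3 : u^12 * u^2 = x := by rw [← hu14]; ring
    nlinarith
  -- B3 : 2*L + 101 ≤ x/1000
  have B3 : 2*L + 101 ≤ x/1000 := by
    have h1 : (56000:ℝ) * u ≤ u^13 * u :=
      mul_le_mul_of_nonneg_right cert3 (by positivity)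
    have h2 : u^13 * u = x := by rw [← hu14]; ring
    nlinarith
  -- now take logs of H1, H2
  have hchoosepos : 0 < (3*n).choose n := Nat.choose_pos (by omega)
  have hCpos : (0:ℝ) < (((3*n).choose n : ℕ) : ℝ) := by exact_mod_cast hchoosepos
  set C : ℝ := (((3*n).choose n : ℕ) : ℝ) with hC
  have hlogH1 : ((3*n:ℕ):ℝ) * Real.log 3
      ≤ Real.log ((3*n+1 : ℕ):ℝ) + (Real.log C + (n:ℝ) * Real.log 4) := by
    have hH1R : (((3:ℕ)^(3*n) : ℕ) : ℝ) ≤ (((3*n+1) * ((3*n).choose n * 4^n) : ℕ) : ℝ) :=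
      Nat.cast_le.2 H1
    have hlhs : (0:ℝ) < (((3:ℕ)^(3*n) : ℕ) : ℝ) := by positivity
    have := Real.log_le_log hlhs hH1R
    rw [show (((3:ℕ)^(3*n) : ℕ) : ℝ) = (3:ℝ)^(3*n) by push_cast; ring,
      Real.log_pow] at this
    rw [show (((3*n+1) * ((3*n).choose n * 4^n) : ℕ) : ℝ)
        = ((3*n+1 : ℕ):ℝ) * (C * 4^n) by push_cast; ring] at this
    rw [Real.log_mul (by positivity) (by positivity), Real.log_mul (by positivity)
      (by positivity), Real.log_pow] at this
    exact this
  -- bound log C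
  set Q : ℝ := ((∏ p ∈ (Finset.range ((3*n)/2+1)).filter Nat.Prime, p : ℕ) : ℝ) with hQ
  have hQpos : (0:ℝ) < Q := by
    rw [hQ]
    have : 0 < ∏ p ∈ (Finset.range ((3*n)/2+1)).filter Nat.Prime, p :=
      Finset.prod_pos fun p hp => (Finset.mem_filter.1 hp).2.pos
    exact_mod_cast this
  have hlogC : Real.log C ≤ (Nat.sqrt (3*n) : ℝ) * L + psi ((3*n)/2) := by
    have hH2R : C ≤ (((3*n)^(Nat.sqrt (3*n)) : ℕ) : ℝ) * Q := by
      rw [hC, hQ]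
      exact_mod_cast H2
    have := Real.log_le_log hCpos hH2R
    rw [Real.log_mul (by positivity) hQpos.ne'] at this
    have hpow : Real.log (((3*n)^(Nat.sqrt (3*n)) : ℕ) : ℝ) = (Nat.sqrt (3*n) : ℝ) * L := by
      push_cast
      rw [Real.log_pow]
      rw [hL, hx]
      push_cast
      ring
    rw [hpow] at this
    have hQpsi : Real.log Q ≤ psi ((3*n)/2) := by
      have h1 := primorial_le_exp_psi ((3*n)/2)
      have hQle : Q ≤ Real.exp (psi ((3*n)/2)) := by rw [hQ]; exact h1
      have h2 := Real.log_le_log hQpos hQle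
      rwa [Real.log_exp] at h2
    linarith
  -- bound psi ((3*n)/2)
  have hpsib : psi ((3*n)/2) ≤ 6/5*Aconst*(x/2) + 8*(L+1)^2 + 101 := by
    have h1 := psi_ub ((3*n)/2)
    have hcast : (((3*n)/2 : ℕ):ℝ) ≤ x/2 := by
      rw [hx]; exact_mod_cast Nat.cast_div_le
    have hone : (1:ℝ) ≤ (((3*n)/2 : ℕ):ℝ) := by
      exact_mod_cast (Nat.one_le_div_iff (by norm_num)).2 (by omega)
    have hlogle : Real.log (((3*n)/2 : ℕ):ℝ) ≤ L := by
      rw [hL]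
      apply Real.log_le_log (by linarith)
      calc (((3*n)/2 : ℕ):ℝ) ≤ x/2 := hcast
        _ ≤ x := by linarith
    have hlognn : 0 ≤ Real.log (((3*n)/2 : ℕ):ℝ) := Real.log_nonneg hone
    have hsq : (Real.log (((3*n)/2 : ℕ):ℝ) + 1)^2 ≤ (L+1)^2 := by
      apply pow_le_pow_left₀ (by linarith) (by linarith)
    have hterm : 6/5*Aconst*(((3*n)/2 : ℕ):ℝ) ≤ 6/5*Aconst*(x/2) :=
      mul_le_mul_of_nonneg_left hcast (by nlinarith [A_nonneg])
    nlinarith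
  -- bound sqrt term
  have hs : (Nat.sqrt (3*n) : ℝ) * L ≤ x/25 := by
    have h1 : (Nat.sqrt (3*n) : ℝ) ≤ Real.sqrt x := by
      rw [hx]; exact Real.nat_sqrt_le_real_sqrt
    calc (Nat.sqrt (3*n) : ℝ) * L ≤ Real.sqrt x * L :=
          mul_le_mul_of_nonneg_right h1 hL0
      _ ≤ x/25 := B1
  -- bound log (3n+1)
  have hlog3n1 : Real.log ((3*n+1 : ℕ):ℝ) ≤ 2*L := by
    have h1 : ((3*n+1 : ℕ):ℝ) ≤ x^2 := by
      have e : ((3*n+1 : ℕ):ℝ) = x + 1 := by rw [hx]; push_cast; ring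
      rw [e]; nlinarith [hx9, hx0]
    calc Real.log ((3*n+1 : ℕ):ℝ) ≤ Real.log (x^2) :=
          Real.log_le_log (by positivity) h1
      _ = 2*L := by rw [Real.log_pow, hL]; push_cast; ring
  have hlog4 : Real.log 4 = 2 * Real.log 2 := by
    rw [show (4:ℝ) = 2^2 by norm_num, Real.log_pow]; push_cast; ring
  -- numerics
  have hx3 : x = 3*(n:ℝ) := by rw [hx]; push_cast; ring
  have hnR : (300000:ℝ) ≤ (n:ℝ) := by exact_mod_cast h
  have l3a := l3_lb
  have l2b := Real.log_two_lt_d9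
  have hAu := A_ub
  have hAn := A_nonneg
  have hl2nn : (0:ℝ) ≤ Real.log 2 := Real.log_nonneg (by norm_num)
  have hcast3n : ((3*n:ℕ):ℝ) = 3*(n:ℝ) := by push_cast; ring
  rw [hcast3n, hlog4] at hlogH1
  -- final contradiction
  nlinarith [hlogH1, hlogC, hpsib, hs, hlog3n1, B2, B3,
    mul_le_mul_of_nonneg_left l3a.le (show (0:ℝ) ≤ 3*(n:ℝ) by linarith),
    mul_le_mul_of_nonneg_left l2b.le (show (0:ℝ) ≤ 2*(n:ℝ) by linarith),
    mul_le_mul_of_nonneg_right hAu.le (show (0:ℝ) ≤ x by linarith)]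


lemma gap_step (N q p : ℕ) (hp : p.Prime) (hcov : 5*p ≤ 8*q)
    (H : N < q → ∃ r, r.Prime ∧ N < r ∧ 5*r ≤ 8*N) (hN : N < p) :
    ∃ r, r.Prime ∧ N < r ∧ 5*r ≤ 8*N := by
  by_cases h : 5*p ≤ 8*N
  · exact ⟨p, hp, hN, h⟩
  · apply H; omega

lemma gap (N : ℕ) (hN : 7 ≤ N) : ∃ p, p.Prime ∧ N < p ∧ 5*p ≤ 8*N := by
  rcases le_or_gt 600000 N with hbig | hsmall
  · -- asymptotic case
    obtain ⟨p, hp, h1, h2⟩ := primeInGap (N/2 + 1) (by omega)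
    exact ⟨p, hp, by omega, by omega⟩
  · have h : N < 806581 := by omega
    refine gap_step N 504121 806581 (by norm_num) (by norm_num) (fun h => ?_) h
    refine gap_step N 315083 504121 (by norm_num) (by norm_num) (fun h => ?_) h
    refine gap_step N 196927 315083 (by norm_num) (by norm_num) (fun h => ?_) h
    refine gap_step N 123091 196927 (by norm_num) (by norm_num) (fun h => ?_) h
    refine gap_step N 76943 123091 (by norm_num) (by norm_num) (fun h => ?_) h
    refine gap_step N 48091 76943 (by norm_num) (by norm_num) (fun h => ?_) h
    refine gap_step N 30059 48091 (by norm_num) (by norm_num) (fun h => ?_) h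
    refine gap_step N 18787 30059 (by norm_num) (by norm_num) (fun h => ?_) h
    refine gap_step N 11743 18787 (by norm_num) (by norm_num) (fun h => ?_) h
    refine gap_step N 7351 11743 (by norm_num) (by norm_num) (fun h => ?_) h
    refine gap_step N 4603 7351 (by norm_num) (by norm_num) (fun h => ?_) h
    refine gap_step N 2879 4603 (by norm_num) (by norm_num) (fun h => ?_) h
    refine gap_step N 1801 2879 (by norm_num) (by norm_num) (fun h => ?_) h
    refine gap_step N 1129 1801 (by norm_num) (by norm_num) (fun h => ?_) h
    refine gap_step N 709 1129 (by norm_num) (by norm_num) (fun h => ?_) h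
    refine gap_step N 449 709 (by norm_num) (by norm_num) (fun h => ?_) h
    refine gap_step N 283 449 (by norm_num) (by norm_num) (fun h => ?_) h
    refine gap_step N 179 283 (by norm_num) (by norm_num) (fun h => ?_) h
    refine gap_step N 113 179 (by norm_num) (by norm_num) (fun h => ?_) h
    refine gap_step N 73 113 (by norm_num) (by norm_num) (fun h => ?_) h
    refine gap_step N 47 73 (by norm_num) (by norm_num) (fun h => ?_) h
    refine gap_step N 31 47 (by norm_num) (by norm_num) (fun h => ?_) h
    refine gap_step N 23 31 (by norm_num) (by norm_num) (fun h => ?_) h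
    refine gap_step N 17 23 (by norm_num) (by norm_num) (fun h => ?_) h
    refine gap_step N 11 17 (by norm_num) (by norm_num) (fun h => ?_) h
    exact ⟨11, by norm_num, by omega, by omega⟩


/-- The invariant for the greedy construction. -/
def Good (m : ℕ) (p : ℕ → ℕ) : Prop :=
  (∀ i, i ≤ m → (p i).Prime) ∧ (∀ i j, i < j → j ≤ m → p i < p j) ∧
  7 ≤ p m ∧
  (0:ℚ) < 1 - ∑ i ∈ Finset.range (m+1), (1:ℚ)/(p i) ∧
  (8 * p m : ℚ) * (1 - ∑ i ∈ Finset.range (m+1), (1:ℚ)/(p i)) < 5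

lemma good_base : Good 2 (fun i => if i = 0 then 2 else if i = 1 then 3 else 7) := by
  refine ⟨?_, ?_, ?_, ?_, ?_⟩
  · intro i hi
    interval_cases i <;> norm_num
  · intro i j hij hj
    interval_cases j <;> interval_cases i <;> norm_num
  · norm_num
  · rw [Finset.sum_range_succ, Finset.sum_range_succ, Finset.sum_range_succ,
      Finset.sum_range_zero]
    norm_num
  · rw [Finset.sum_range_succ, Finset.sum_range_succ, Finset.sum_range_succ,
      Finset.sum_range_zero]
    norm_num

lemma good_step (m : ℕ) (p : ℕ → ℕ) (hg : Good m p) :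
    ∃ p' : ℕ → ℕ, Good (m+1) p' ∧ (∀ i, i ≤ m → p' i = p i) := by
  obtain ⟨hprime, hmono, h7, hpos, hinv⟩ := hg
  set S : ℚ := ∑ i ∈ Finset.range (m+1), (1:ℚ)/(p i) with hS
  set δ : ℚ := 1 - S with hδdef
  have hδ : 0 < δ := hpos
  have hpmQ : (7:ℚ) ≤ (p m : ℚ) := by exact_mod_cast h7
  have hpm0 : (0:ℚ) < (p m : ℚ) := by linarith
  have hδub : δ < 5/(8*(p m : ℚ)) := by
    rw [lt_div_iff₀ (by positivity)]
    nlinarith [hinv]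
  have hinv2 : 8*(p m : ℚ)/5 < 1/δ := by
    rw [div_lt_div_iff₀ (by norm_num) hδ]
    nlinarith [hinv]
  set N : ℕ := Nat.floor ((1:ℚ)/δ) with hNdef
  have hN1 : (N:ℚ) ≤ 1/δ := Nat.floor_le (by positivity)
  have hN2 : 1/δ < (N:ℚ) + 1 := Nat.lt_floor_add_one _
  have hN7 : 7 ≤ N := by
    have h1 : (10:ℚ) < (N:ℚ) + 1 := by
      calc (10:ℚ) < 8*7/5 := by norm_num
        _ ≤ 8*(p m : ℚ)/5 := by linarith
        _ < 1/δ := hinv2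
        _ < (N:ℚ) + 1 := hN2
    have : (9:ℚ) < (N:ℚ) := by linarith
    exact_mod_cast (by exact_mod_cast this : (9:ℕ) < N).le.trans' (by norm_num)
  obtain ⟨q, hqprime, hqgt, hqle⟩ := gap N hN7
  have hqgtQ : (N:ℚ) + 1 ≤ (q:ℚ) := by exact_mod_cast hqgt
  have hq1 : 1/δ < (q:ℚ) := lt_of_lt_of_le hN2 hqgtQ
  have hq0 : (0:ℚ) < (q:ℚ) := lt_trans (by positivity) hq1
  have hrecip : (1:ℚ)/(q:ℚ) < δ := by
    have h := one_div_lt_one_div_of_lt (show (0:ℚ) < 1/δ by positivity) hq1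
    rwa [one_div_one_div] at h
  have hqpm : p m < q := by
    have : (p m : ℚ) < (q:ℚ) := by
      calc (p m : ℚ) < 8*(p m:ℚ)/5 := by linarith
        _ < 1/δ := hinv2
        _ < q := hq1
    exact_mod_cast this
  have hqleQ : 5*(q:ℚ) ≤ 8*(N:ℚ) := by exact_mod_cast hqle
  refine ⟨fun i => if i ≤ m then p i else q, ⟨?_, ?_, ?_, ?_, ?_⟩, ?_⟩
  · intro i hi
    by_cases h : i ≤ m
    · simp only [if_pos h]; exact hprime i h
    · simp only [if_neg h]; exact hqprime
  · intro i j hij hj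
    by_cases hjm : j ≤ m
    · simp only [if_pos hjm, if_pos (le_trans hij.le hjm)]
      exact hmono i j hij hjm
    · simp only [if_neg hjm]
      have him : i ≤ m := by omega
      simp only [if_pos him]
      calc p i ≤ p m := by
            rcases Nat.eq_or_lt_of_le him with h | h
            · rw [h]
            · exact (hmono i m h le_rfl).le
        _ < q := hqpm
  · simp only [if_neg (show ¬ m+1 ≤ m by omega)]
    omega
  · have hsum : ∑ i ∈ Finset.range (m+2), (1:ℚ)/((if i ≤ m then p i else q) : ℕ)
        = S + 1/(q:ℚ) := by
      rw [Finset.sum_range_succ]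
      simp only [if_neg (show ¬ m+1 ≤ m by omega)]
      congr 1
      rw [hS]
      apply Finset.sum_congr rfl
      intro i hi
      rw [Finset.mem_range] at hi
      simp only [if_pos (show i ≤ m by omega)]
    rw [show m+1+1 = m+2 from rfl, hsum]
    have : 1 - (S + 1/(q:ℚ)) = δ - 1/(q:ℚ) := by rw [hδdef]; ring
    rw [this]
    linarith
  · have hsum : ∑ i ∈ Finset.range (m+2), (1:ℚ)/((if i ≤ m then p i else q) : ℕ)
        = S + 1/(q:ℚ) := by
      rw [Finset.sum_range_succ]
      simp only [if_neg (show ¬ m+1 ≤ m by omega)]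
      congr 1
      rw [hS]
      apply Finset.sum_congr rfl
      intro i hi
      rw [Finset.mem_range] at hi
      simp only [if_pos (show i ≤ m by omega)]
    simp only [if_neg (show ¬ m+1 ≤ m by omega)]
    rw [show m+1+1 = m+2 from rfl, hsum]
    have heq : 1 - (S + 1/(q:ℚ)) = δ - 1/(q:ℚ) := by rw [hδdef]; ring
    rw [heq]
    -- 8 q (δ - 1/q) = 8 q δ - 8 ≤ 8*(8N/5)*δ - 8 ≤ 64/5 - 8 < 5
    have hqδ : (q:ℚ) * δ ≤ 8/5 := by
      have h1 : 5*(q:ℚ)*δ ≤ 8*(N:ℚ)*δ := by nlinarith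
      have h2 : 8*(N:ℚ)*δ ≤ 8 := by
        have := mul_le_mul_of_nonneg_right hN1 hδ.le
        calc 8*(N:ℚ)*δ = 8*((N:ℚ)*δ) := by ring
          _ ≤ 8*((1/δ)*δ) := by nlinarith
          _ = 8 := by field_simp
      nlinarith
    have hexp : (8*(q:ℚ)) * (δ - 1/(q:ℚ)) = 8*((q:ℚ)*δ) - 8 := by
      field_simp
    push_cast
    rw [hexp]
    nlinarith [hqδ]
  · intro i hi
    simp only [if_pos hi]

lemma good_exists : ∀ m, 2 ≤ m → ∃ p, Good m p := by
  intro m hm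
  induction m, hm using Nat.le_induction with
  | base => exact ⟨_, good_base⟩
  | succ m hm ih =>
    obtain ⟨p, hp⟩ := ih
    obtain ⟨p', hp', _⟩ := good_step m p hp
    exact ⟨p', hp'⟩

lemma good_finish (m : ℕ) (p : ℕ → ℕ) (hg : Good m p) :
    ∃ Q : ℕ, Q.Prime ∧ p m < Q ∧
      1 < (∑ i ∈ Finset.range (m+1), (1:ℚ)/(p i)) + 1/(Q:ℚ) := by
  obtain ⟨hprime, hmono, h7, hpos, hinv⟩ := hg
  obtain ⟨Q, hQprime, hQgt, hQle⟩ := gap (p m) h7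
  have hpmQ : (0:ℚ) < (p m : ℚ) := by
    have : 0 < p m := by omega
    exact_mod_cast this
  have hQ0 : (0:ℚ) < (Q:ℚ) := by
    have := hQprime.pos
    exact_mod_cast this
  have hQleQ : 5*(Q:ℚ) ≤ 8*(p m : ℚ) := by exact_mod_cast hQle
  have hrecip : 5/(8*(p m:ℚ)) ≤ 1/(Q:ℚ) := by
    rw [div_le_div_iff₀ (by positivity) hQ0]
    linarith
  have hδ : 1 - (∑ i ∈ Finset.range (m+1), (1:ℚ)/(p i)) < 5/(8*(p m:ℚ)) := by
    rw [lt_div_iff₀ (by positivity)]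
    nlinarith [hinv]
  refine ⟨Q, hQprime, hQgt, ?_⟩
  have : 1 - (∑ i ∈ Finset.range (m+1), (1:ℚ)/(p i)) < 1/(Q:ℚ) := lt_of_lt_of_le hδ hrecip
  linarith


end Stmt3Aux

/-- For every `n ≥ 2` there are primes `p 0 < p 1 < ⋯ < p n` such that the sum of the
reciprocals of the first `n` of them is less than `1`, while adding the reciprocal of the
last one pushes the sum above `1`. -/
theorem stmt_3 (n : ℕ) (hn : 2 ≤ n) :
    ∃ p : ℕ → ℕ, (∀ i, i ≤ n → (p i).Prime) ∧
      (∀ i j, i < j → j ≤ n → p i < p j) ∧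
      ∑ i ∈ Finset.range n, (1 : ℚ) / p i < 1 ∧
      1 < ∑ i ∈ Finset.range (n + 1), (1 : ℚ) / p i := by
  rcases Nat.eq_or_lt_of_le hn with h2 | h3
  · -- the case n = 2 : use the primes 2, 3, 5
    refine ⟨fun i => if i = 0 then 2 else if i = 1 then 3 else 5, ?_, ?_, ?_, ?_⟩
    · intro i hi
      rw [← h2] at hi
      interval_cases i <;> norm_num
    · intro i j hij hj
      rw [← h2] at hj
      interval_cases j <;> interval_cases i <;> norm_num
    · rw [← h2]
      rw [Finset.sum_range_succ, Finset.sum_range_succ, Finset.sum_range_zero]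
      norm_num
    · rw [← h2]
      rw [Finset.sum_range_succ, Finset.sum_range_succ, Finset.sum_range_succ,
        Finset.sum_range_zero]
      norm_num
  · -- the case n ≥ 3 : greedy construction
    have hm : 2 ≤ n - 1 := by omega
    obtain ⟨p, hg⟩ := Stmt3Aux.good_exists (n-1) hm
    obtain ⟨Q, hQp, hQgt, hQsum⟩ := Stmt3Aux.good_finish (n-1) p hg
    obtain ⟨hprime, hmono, h7, hpos, hinv⟩ := hg
    have hn1 : n - 1 + 1 = n := by omega
    refine ⟨fun i => if i ≤ n-1 then p i else Q, ?_, ?_, ?_, ?_⟩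
    · intro i hi
      by_cases h : i ≤ n-1
      · simp only [if_pos h]; exact hprime i h
      · simp only [if_neg h]; exact hQp
    · intro i j hij hj
      by_cases hjm : j ≤ n-1
      · simp only [if_pos hjm, if_pos (le_trans hij.le hjm)]
        exact hmono i j hij hjm
      · simp only [if_neg hjm]
        have him : i ≤ n-1 := by omega
        simp only [if_pos him]
        calc p i ≤ p (n-1) := by
              rcases Nat.eq_or_lt_of_le him with h | h
              · rw [h]
              · exact (hmono i (n-1) h le_rfl).le
          _ < Q := hQgt
    · have hsum : ∑ i ∈ Finset.range n, (1:ℚ)/((if i ≤ n-1 then p i else Q) : ℕ)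
          = ∑ i ∈ Finset.range (n-1+1), (1:ℚ)/(p i) := by
        rw [hn1]
        apply Finset.sum_congr rfl
        intro i hi
        rw [Finset.mem_range] at hi
        simp only [if_pos (show i ≤ n-1 by omega)]
      rw [hsum]
      linarith
    · have hsum : ∑ i ∈ Finset.range (n+1), (1:ℚ)/((if i ≤ n-1 then p i else Q) : ℕ)
          = (∑ i ∈ Finset.range (n-1+1), (1:ℚ)/(p i)) + 1/(Q:ℚ) := by
        rw [Finset.sum_range_succ]
        congr 1
        · apply Finset.sum_congr (by rw [hn1])
          intro i hi
          rw [Finset.mem_range, hn1] at hi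
          simp only [if_pos (show i ≤ n-1 by omega)]
        · simp only [if_neg (show ¬ n ≤ n-1 by omega)]
      rw [hsum]
      exact hQsum
end

section
/- Define δ(n) to be the minimal nonnegative value of 1 - 1/p_1 - ... - 1/p_n over all collections of n distinct primes p_1, ..., p_n (this minimum exists and is positive). Then δ(n) ≤ 1/2^n for all n ≥ 5. -/
/-- `delta n` is the infimum of the nonnegative values `1 - 1/p₁ - ⋯ - 1/pₙ`
over all collections of `n` distinct primes `p₁, …, pₙ`. -/
noncomputable def delta (n : ℕ) : ℝ :=
  sInf {x : ℝ | 0 ≤ x ∧ ∃ s : Finset ℕ, s.card = n ∧ (∀ p ∈ s, p.Prime) ∧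
    x = 1 - ∑ p ∈ s, (1 : ℝ) / p}

lemma key_witness (n : ℕ) (hn : 5 ≤ n) : ∃ s : Finset ℕ, s.card = n ∧
    (∀ p ∈ s, p.Prime) ∧ 0 < 1 - ∑ p ∈ s, (1 : ℝ) / p ∧
    1 - ∑ p ∈ s, (1 : ℝ) / p ≤ 1 / 2 ^ n ∧
    ∀ p ∈ s, 1 - ∑ q ∈ s, (1 : ℝ) / q ≤ 1 / p := by
  induction n, hn using Nat.le_induction with
  | base =>
    refine ⟨{2, 3, 7, 43, 1811}, by decide, ?_, ?_, ?_, ?_⟩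
    · intro p hp
      fin_cases hp <;> norm_num
    · norm_num
    · norm_num
    · intro p hp
      fin_cases hp <;> norm_num
  | succ n hn ih =>
    obtain ⟨s, hcard, hprime, hpos, hle, hinv⟩ := ih
    set δ : ℝ := 1 - ∑ p ∈ s, (1 : ℝ) / p with hδdef
    clear_value δ
    have hδ1 : δ ≤ 1 / 32 := by
      refine hle.trans ?_
      rw [div_le_div_iff₀ (by positivity) (by norm_num)]
      have : (2:ℝ) ^ 5 ≤ 2 ^ n := pow_le_pow_right₀ (by norm_num) hn
      norm_num at this ⊢
      linarith
    set m : ℕ := ⌊1 / δ⌋₊ with hm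
    clear_value m
    have hm0 : m ≠ 0 := by
      rw [hm, Nat.ne_zero_iff_zero_lt, Nat.floor_pos]
      rw [le_div_iff₀ hpos]
      linarith
    have hmle : (m : ℝ) ≤ 1 / δ := by
      rw [hm]; exact Nat.floor_le (by positivity)
    have hmgt : 1 / δ < (m : ℝ) + 1 := by
      rw [hm]; exact Nat.lt_floor_add_one _
    obtain ⟨q, hqprime, hqm, hq2m⟩ := Nat.exists_prime_lt_and_le_two_mul m hm0
    have hqpos : (0 : ℝ) < q := by exact_mod_cast hqprime.pos
    have hq1 : 1 / δ < (q : ℝ) := by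
      have : (m : ℝ) + 1 ≤ q := by exact_mod_cast hqm
      linarith
    have hqδ : 1 / (q : ℝ) < δ := by
      rw [div_lt_iff₀ hqpos]
      rw [div_lt_iff₀ hpos] at hq1
      nlinarith
    have hq2 : δ / 2 ≤ 1 / (q : ℝ) := by
      rw [le_div_iff₀ hqpos]
      have hq2m' : (q : ℝ) ≤ 2 * m := by exact_mod_cast hq2m
      rw [le_div_iff₀ hpos] at hmle
      nlinarith [mul_le_mul_of_nonneg_left hq2m' hpos.le]
    have hqs : q ∉ s := fun h => absurd (hinv q h) (by linarith)
    refine ⟨insert q s, ?_, ?_, ?_, ?_, ?_⟩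
    · rw [Finset.card_insert_of_notMem hqs, hcard]
    · intro p hp
      rcases Finset.mem_insert.mp hp with h | h
      · exact h ▸ hqprime
      · exact hprime p h
    · rw [Finset.sum_insert hqs]
      linarith
    · rw [Finset.sum_insert hqs]
      have : (1 : ℝ) / 2 ^ (n + 1) = (1 / 2 ^ n) / 2 := by
        rw [pow_succ]; ring
      rw [this]
      linarith
    · intro p hp
      rw [Finset.sum_insert hqs]
      rcases Finset.mem_insert.mp hp with h | h
      · subst h; linarith
      · have := hinv p h
        have hp0 : (0 : ℝ) < 1 / q := by positivity
        linarith

/-- For `n ≥ 5` one has `δ(n) ≤ 1/2^n`. -/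
theorem stmt_4 (n : ℕ) (hn : 5 ≤ n) : delta n ≤ 1 / 2 ^ n := by
  obtain ⟨s, hcard, hprime, hpos, hle, -⟩ := key_witness n hn
  have hmem : (1 - ∑ p ∈ s, (1 : ℝ) / p) ∈ {x : ℝ | 0 ≤ x ∧ ∃ s : Finset ℕ,
      s.card = n ∧ (∀ p ∈ s, p.Prime) ∧ x = 1 - ∑ p ∈ s, (1 : ℝ) / p} :=
    ⟨hpos.le, s, hcard, hprime, rfl⟩
  have hbdd : BddBelow {x : ℝ | 0 ≤ x ∧ ∃ s : Finset ℕ,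
      s.card = n ∧ (∀ p ∈ s, p.Prime) ∧ x = 1 - ∑ p ∈ s, (1 : ℝ) / p} :=
    ⟨0, fun x hx => hx.1⟩
  exact (csInf_le hbdd hmem).trans hle
end

section
/- Let p_0, ..., p_N be distinct primes, P = p_0···p_N, and P_l = P / p_l for each l. Then there do not exist positive integers β_0, ..., β_N with N·P = β_0·P_0 + ... + β_N·P_N. -/
/-- If `p 0, …, p N` are distinct primes, `P` their product and `P_l = P / p l`, then
`N * P` is not a positive integer combination of the `P_l`. -/
theorem stmt_8 (N : ℕ) (p : Fin (N + 1) → ℕ) (hp : ∀ l, (p l).Prime)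
    (hinj : Function.Injective p) :
    ¬ ∃ β : Fin (N + 1) → ℕ, (∀ l, 0 < β l) ∧
      N * ∏ l, p l = ∑ l, β l * ((∏ i, p i) / p l) := by
  rintro ⟨β, hβ, heq⟩
  set P := ∏ l, p l with hP
  have hppos : ∀ l, 0 < p l := fun l => (hp l).pos
  have hQ : ∀ l, P / p l = ∏ i ∈ Finset.univ.erase l, p i := by
    intro l
    rw [hP, ← Finset.mul_prod_erase _ _ (Finset.mem_univ l),
      Nat.mul_div_cancel_left _ (hppos l)]
  have hPl : ∀ l, p l * (P / p l) = P := by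
    intro l
    rw [hQ l, hP, Finset.mul_prod_erase _ _ (Finset.mem_univ l)]
  have hdvd : ∀ l, p l ∣ β l := by
    intro l
    have h1 : p l ∣ ∑ i, β i * (P / p i) := by
      rw [← heq]
      exact Dvd.dvd.mul_left (Finset.dvd_prod_of_mem p (Finset.mem_univ l)) N
    have hsum : ∑ i, β i * (P / p i)
        = β l * (P / p l) + ∑ i ∈ Finset.univ.erase l, β i * (P / p i) := by
      exact (Finset.add_sum_erase _ (fun i => β i * (P / p i)) (Finset.mem_univ l)).symm
    have h3 : p l ∣ ∑ i ∈ Finset.univ.erase l, β i * (P / p i) := by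
      apply Finset.dvd_sum
      intro i hi
      have hil : l ≠ i := fun h => (Finset.mem_erase.mp hi).1 h.symm
      have : p l ∣ P / p i := by
        rw [hQ i]
        exact Finset.dvd_prod_of_mem p (Finset.mem_erase.mpr ⟨hil, Finset.mem_univ l⟩)
      exact this.mul_left _
    rw [hsum] at h1
    have h2 : p l ∣ β l * (P / p l) := (Nat.dvd_add_iff_left h3).mpr h1
    rcases ((hp l).prime.dvd_mul).mp h2 with h | h
    · exact h
    · exfalso
      rw [hQ l] at h
      rcases (hp l).prime.dvd_finset_prod_iff p |>.mp h with ⟨i, hi, hdvd'⟩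
      have : p l = p i := ((Nat.prime_dvd_prime_iff_eq (hp l) (hp i)).mp hdvd')
      exact (Finset.mem_erase.mp hi).1 (hinj this.symm)
  have hle : ∀ l, p l ≤ β l := fun l => Nat.le_of_dvd (hβ l) (hdvd l)
  have hbig : (N + 1) * P ≤ ∑ l, β l * (P / p l) := by
    calc (N + 1) * P = ∑ l : Fin (N + 1), P := by
          rw [Finset.sum_const, Finset.card_univ, Fintype.card_fin, smul_eq_mul]
      _ = ∑ l, p l * (P / p l) := by
          exact Finset.sum_congr rfl fun l _ => (hPl l).symm
      _ ≤ ∑ l, β l * (P / p l) :=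
          Finset.sum_le_sum fun l _ => Nat.mul_le_mul_right _ (hle l)
  rw [← heq] at hbig
  have hPpos : 0 < P := Finset.prod_pos fun l _ => hppos l
  nlinarith
end

section
/- Call a pair of tuples of positive integers d = (d_1, ..., d_k), a = (a_0, ..., a_N) a regular pair if for every subset of r weights a_{i_1}, ..., a_{i_r} whose gcd δ is greater than 1, there exist r degrees d_{s_1}, ..., d_{s_r} whose gcd is divisible by δ. If (d, a) is a regular pair and, up to permutation, a = (d_1, ..., d_k, a_k, ..., a_N), then a_k = a_{k+1} = ... = a_N = 1. -/
/-- A pair of tuples of degrees `d = (d₁, …, d_k)` and weights `a = (a₀, …, a_N)` is a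
regular pair if for every collection of weights whose gcd `δ` is greater than `1` there is
a collection of degrees of the same cardinality whose gcd is divisible by `δ`. -/
def IsRegularPair {k N : ℕ} (d : Fin k → ℕ) (a : Fin (N + 1) → ℕ) : Prop :=
  ∀ I : Finset (Fin (N + 1)), 1 < I.gcd a →
    ∃ J : Finset (Fin k), J.card = I.card ∧ I.gcd a ∣ J.gcd d

/-- If `(d, a)` is a regular pair and, up to permutation, `a = (d₁, …, d_k, a_k, …, a_N)`,
then all the remaining weights `a_k, …, a_N` are equal to `1`. -/
theorem stmt_9 {k N : ℕ} (d : Fin k → ℕ) (a : Fin (N + 1) → ℕ)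
    (hd : ∀ u, 0 < d u) (ha : ∀ l, 0 < a l)
    (hreg : IsRegularPair d a)
    (e : Fin k ↪ Fin (N + 1)) (he : ∀ u, a (e u) = d u) :
    ∀ l : Fin (N + 1), (∀ u, e u ≠ l) → a l = 1 := by
  intro l hl
  by_contra h
  have hal : 1 < a l := lt_of_le_of_ne (ha l) (Ne.symm h)
  obtain ⟨p, hp, hpd⟩ := (a l).exists_prime_and_dvd (by omega)
  set I : Finset (Fin (N + 1)) := Finset.univ.filter (fun i => p ∣ a i) with hI
  have hlI : l ∈ I := by simp [hI, hpd]
  have hpg : p ∣ I.gcd a := Finset.dvd_gcd (fun i hi => by simpa [hI] using hi)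
  have hgne : I.gcd a ≠ 0 := by
    intro h0
    exact (ha l).ne' (Finset.gcd_eq_zero_iff.mp h0 l hlI)
  have hg1 : 1 < I.gcd a := by
    have hple := Nat.le_of_dvd (Nat.pos_of_ne_zero hgne) hpg
    have := hp.two_le
    omega
  obtain ⟨J, hJcard, hJdvd⟩ := hreg I hg1
  have hmap : J.map e ⊆ I := by
    intro i hi
    simp only [Finset.mem_map] at hi
    obtain ⟨u, hu, rfl⟩ := hi
    have : p ∣ d u := dvd_trans (dvd_trans hpg hJdvd) (Finset.gcd_dvd hu)
    simp [hI, he u, this]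
  have hnot : l ∉ J.map e := by
    simp only [Finset.mem_map]
    rintro ⟨u, _, h'⟩
    exact hl u h'
  have hsub : insert l (J.map e) ⊆ I := by
    intro i hi
    rcases Finset.mem_insert.mp hi with rfl | hi
    · exact hlI
    · exact hmap hi
  have := Finset.card_le_card hsub
  rw [Finset.card_insert_of_notMem hnot, Finset.card_map, hJcard] at this
  omega
end

section
/- Let (d, a) be a regular pair with d = (d_1, ..., d_k), a = (a_0, ..., a_N), N ≥ k, such that every weight a_l > 1. Then Σ d_u - Σ a_l > 0 (i.e., the pair is of general type). -/
open ArithmeticFunction Finset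

/-- The weight function `Λ m = φ m - 2 μ m`. -/
private def lam (m : ℕ) : ℤ := (Nat.totient m : ℤ) - 2 * (moebius m)

private lemma lam_nonneg {m : ℕ} (hm : 2 ≤ m) : 0 ≤ lam m := by
  unfold lam
  rcases eq_or_lt_of_le hm with h | h
  · subst h
    rw [show moebius 2 = -1 from moebius_apply_prime Nat.prime_two]
    norm_num
  · have hφpos : 0 < Nat.totient m := Nat.totient_pos.2 (by omega)
    have hφeven : Even (Nat.totient m) := Nat.totient_even h
    have hφ2 : 2 ≤ Nat.totient m := by
      rcases hφeven with ⟨r, hr⟩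
      omega
    have hc : (2 : ℤ) ≤ (Nat.totient m : ℤ) := by exact_mod_cast hφ2
    rcases moebius_eq_or m with h0 | h1 | h2
    · rw [h0]; omega
    · rw [h1]; omega
    · rw [h2]; omega

/-- Divisor sum of `lam` over divisors `≥ 2` of `n ≥ 2` is `n + 1`. -/
private lemma sum_lam {n : ℕ} (hn : 2 ≤ n) :
    ∑ m ∈ n.divisors.erase 1, lam m = (n : ℤ) + 1 := by
  have hn0 : n ≠ 0 := by omega
  have h1mem : 1 ∈ n.divisors := Nat.one_mem_divisors.2 hn0
  have htot : ∑ m ∈ n.divisors, (Nat.totient m : ℤ) = (n : ℤ) := by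
    rw [← Nat.cast_sum]
    exact_mod_cast congrArg (Nat.cast (R := ℤ)) (Nat.sum_totient n)
  have hmoeb : ∑ m ∈ n.divisors, moebius m = 0 := by
    have h := (coe_mul_zeta_apply (R := ℤ) (f := moebius) (x := n))
    rw [moebius_mul_coe_zeta] at h
    rw [← h, one_apply_ne (by omega : n ≠ 1)]
  have hsum : ∑ m ∈ n.divisors, lam m = (n : ℤ) := by
    unfold lam
    rw [Finset.sum_sub_distrib, htot, ← Finset.mul_sum, hmoeb]
    ring
  have herase := Finset.add_sum_erase n.divisors lam h1mem
  have hlam1 : lam 1 = -1 := by unfold lam; simp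
  rw [hlam1, hsum] at herase
  linarith

/-- A regular pair with `N ≥ k` all of whose weights are greater than `1` is of
general type: the sum of the degrees exceeds the sum of the weights. -/
theorem stmt_10 {k N : ℕ} (d : Fin k → ℕ) (a : Fin (N + 1) → ℕ)
    (hd : ∀ u, 0 < d u) (ha : ∀ l, 1 < a l) (hkN : k ≤ N)
    (hreg : IsRegularPair d a) :
    ∑ l, a l < ∑ u, d u := by
  classical
  -- counting consequence of regularity
  have hcnt : ∀ m : ℕ, 2 ≤ m →
      (Finset.univ.filter fun l => m ∣ a l).card ≤
      (Finset.univ.filter fun u => m ∣ d u).card := by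
    intro m hm
    set I : Finset (Fin (N + 1)) := Finset.univ.filter fun l => m ∣ a l with hI
    rcases I.eq_empty_or_nonempty with hIe | hIne
    · rw [hIe]
      simp
    · have hdvd : m ∣ I.gcd a := Finset.dvd_gcd fun i hi => (Finset.mem_filter.1 hi).2
      have hgcd1 : 1 < I.gcd a := by
        rcases hIne with ⟨i, hi⟩
        have hai : m ∣ a i := (Finset.mem_filter.1 hi).2
        have : I.gcd a ∣ a i := Finset.gcd_dvd hi
        have hpos : 0 < I.gcd a := Nat.pos_of_dvd_of_pos this (by have := ha i; omega)
        rcases hdvd with ⟨c, hc⟩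
        rcases Nat.eq_zero_or_pos c with rfl | hcpos
        · omega
        · nlinarith
      obtain ⟨J, hJcard, hJdvd⟩ := hreg I hgcd1
      have hJsub : J ⊆ Finset.univ.filter fun u => m ∣ d u := by
        intro u hu
        refine Finset.mem_filter.2 ⟨Finset.mem_univ u, ?_⟩
        exact dvd_trans (dvd_trans hdvd hJdvd) (Finset.gcd_dvd hu)
      calc I.card = J.card := hJcard.symm
        _ ≤ _ := Finset.card_le_card hJsub
  -- the bound M and the index set of moduli
  set M : ℕ := (∑ l, a l) + (∑ u, d u) with hM
  have haM : ∀ l, a l ≤ M := by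
    intro l
    have : a l ≤ ∑ l, a l := Finset.single_le_sum (fun i _ => Nat.zero_le (a i)) (Finset.mem_univ l)
    omega
  have hdM : ∀ u, d u ≤ M := by
    intro u
    have : d u ≤ ∑ u, d u := Finset.single_le_sum (fun i _ => Nat.zero_le (d i)) (Finset.mem_univ u)
    omega
  set S : Finset ℕ := Finset.Icc 2 M with hS
  -- per-element identity for weights
  have hfilter : ∀ n : ℕ, 2 ≤ n → n ≤ M → S.filter (· ∣ n) = n.divisors.erase 1 := by
    intro n h2 hle
    ext m
    simp only [hS, Finset.mem_filter, Finset.mem_Icc, Finset.mem_erase, Nat.mem_divisors]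
    constructor
    · rintro ⟨⟨hm2, _⟩, hdvd⟩
      exact ⟨by omega, hdvd, by omega⟩
    · rintro ⟨hne, hdvd, hn0⟩
      have hmpos : 0 < m := Nat.pos_of_dvd_of_pos hdvd (by omega)
      have : m ≤ n := Nat.le_of_dvd (by omega) hdvd
      exact ⟨⟨by omega, by omega⟩, hdvd⟩
  have hweight : ∀ l, ∑ m ∈ S.filter (· ∣ a l), lam m = (a l : ℤ) + 1 := by
    intro l
    rw [hfilter (a l) (ha l) (haM l)]
    exact sum_lam (ha l)
  have hdeg : ∀ u, ∑ m ∈ S.filter (· ∣ d u), lam m ≤ (d u : ℤ) + 1 := by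
    intro u
    rcases Nat.lt_or_ge (d u) 2 with h1 | h2
    · have hdu : d u = 1 := by have := hd u; omega
      have : S.filter (· ∣ d u) = ∅ := by
        ext m
        simp only [hS, Finset.mem_filter, Finset.mem_Icc, Finset.notMem_empty, iff_false]
        rintro ⟨⟨hm2, _⟩, hdvd⟩
        rw [hdu] at hdvd
        have := Nat.le_of_dvd one_pos hdvd
        omega
      rw [this]
      simp [hdu]
    · rw [hfilter (d u) h2 (hdM u)]
      rw [sum_lam h2]
  -- swap sums: ∑_l (a l + 1) = ∑_{m ∈ S} lam m * count_a m
  have hswapa : ∑ l, ((a l : ℤ) + 1) =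
      ∑ m ∈ S, lam m * ((Finset.univ.filter fun l => m ∣ a l).card : ℤ) := by
    calc ∑ l, ((a l : ℤ) + 1) = ∑ l, ∑ m ∈ S.filter (· ∣ a l), lam m := by
          exact Finset.sum_congr rfl fun l _ => (hweight l).symm
      _ = ∑ l, ∑ m ∈ S, if m ∣ a l then lam m else 0 := by
          exact Finset.sum_congr rfl fun l _ => (Finset.sum_filter _ _)
      _ = ∑ m ∈ S, ∑ l, if m ∣ a l then lam m else 0 := Finset.sum_comm
      _ = ∑ m ∈ S, lam m * ((Finset.univ.filter fun l => m ∣ a l).card : ℤ) := by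
          refine Finset.sum_congr rfl fun m _ => ?_
          rw [← Finset.sum_filter]
          rw [Finset.sum_const]
          ring
  have hswapd : ∑ m ∈ S, lam m * ((Finset.univ.filter fun u => m ∣ d u).card : ℤ) ≤
      ∑ u, ((d u : ℤ) + 1) := by
    calc ∑ m ∈ S, lam m * ((Finset.univ.filter fun u => m ∣ d u).card : ℤ)
        = ∑ m ∈ S, ∑ u, (if m ∣ d u then lam m else 0) := by
          refine Finset.sum_congr rfl fun m _ => ?_
          rw [← Finset.sum_filter, Finset.sum_const]
          ring
      _ = ∑ u, ∑ m ∈ S, if m ∣ d u then lam m else 0 := Finset.sum_comm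
      _ = ∑ u, ∑ m ∈ S.filter (· ∣ d u), lam m := by
          exact Finset.sum_congr rfl fun u _ => (Finset.sum_filter _ _).symm
      _ ≤ ∑ u, ((d u : ℤ) + 1) := Finset.sum_le_sum fun u _ => hdeg u
  -- middle comparison
  have hmid : ∑ m ∈ S, lam m * ((Finset.univ.filter fun l => m ∣ a l).card : ℤ) ≤
      ∑ m ∈ S, lam m * ((Finset.univ.filter fun u => m ∣ d u).card : ℤ) := by
    refine Finset.sum_le_sum fun m hm => ?_
    have hm2 : 2 ≤ m := (Finset.mem_Icc.1 hm).1
    have := hcnt m hm2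
    have hnn := lam_nonneg hm2
    have hcast : ((Finset.univ.filter fun l => m ∣ a l).card : ℤ) ≤
        ((Finset.univ.filter fun u => m ∣ d u).card : ℤ) := by exact_mod_cast this
    exact mul_le_mul_of_nonneg_left hcast hnn
  have hfinal : ∑ l, ((a l : ℤ) + 1) ≤ ∑ u, ((d u : ℤ) + 1) := by
    rw [hswapa]
    exact le_trans hmid hswapd
  -- conclude
  have hliftA : ∑ l, ((a l : ℤ) + 1) = (∑ l, a l : ℕ) + (N + 1) := by
    rw [Finset.sum_add_distrib]
    push_cast
    simp [Finset.card_univ]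
  have hliftD : ∑ u, ((d u : ℤ) + 1) = (∑ u, d u : ℕ) + k := by
    rw [Finset.sum_add_distrib]
    push_cast
    simp [Finset.card_univ]
  rw [hliftA, hliftD] at hfinal
  have : ((∑ l, a l : ℕ) : ℤ) < ((∑ u, d u : ℕ) : ℤ) := by
    have hk : (k : ℤ) ≤ (N : ℤ) := by exact_mod_cast hkN
    linarith
  exact_mod_cast this
end

section
/- Let m ≥ 2 and let p_0 < ... < p_m < p_{m+1} be primes with 1/p_0 + ... + 1/p_m < 1 < 1/p_0 + ... + 1/p_m + 1/p_{m+1}. Set a_s = (p_0···p_m)/p_s for s = 0, ..., m, and let i = 2·p_0···p_m − 2(a_0 + ... + a_m). Then i > 0, and for all s, t ∈ {0, ..., m} one has i − a_s − a_t < 0. -/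
open Finset

/-- The product `p 0 ⋯ p m`. -/
def Pprod (p : ℕ → ℕ) (m : ℕ) : ℕ := ∏ i ∈ range (m + 1), p i

/-- The weight `a s = (p 0 ⋯ p m) / p s`. -/
def wt (p : ℕ → ℕ) (m s : ℕ) : ℕ := Pprod p m / p s

/-- The index `i = 2·p 0 ⋯ p m − 2(a 0 + ⋯ + a m)`, as an integer. -/
def idx (p : ℕ → ℕ) (m : ℕ) : ℤ :=
  2 * (Pprod p m : ℤ) - 2 * ∑ s ∈ range (m + 1), (wt p m s : ℤ)

/-- For primes `p 0 < ⋯ < p m < p (m+1)` with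
`1/p 0 + ⋯ + 1/p m < 1 < 1/p 0 + ⋯ + 1/p m + 1/p (m+1)` and `m ≥ 2`,
the index `i` is positive, but `i < a s + a t` for all `s, t ≤ m`. -/
theorem stmt_15 (m : ℕ) (hm : 2 ≤ m) (p : ℕ → ℕ)
    (hp : ∀ i, i ≤ m + 1 → (p i).Prime)
    (hmono : ∀ i j, i < j → j ≤ m + 1 → p i < p j)
    (h1 : ∑ i ∈ range (m + 1), (1 : ℚ) / p i < 1)
    (h2 : 1 < ∑ i ∈ range (m + 2), (1 : ℚ) / p i) :
    0 < idx p m ∧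
      ∀ s t, s ≤ m → t ≤ m → idx p m - wt p m s - wt p m t < 0 := by
  have hPpos : 0 < Pprod p m := Finset.prod_pos (fun i hi => (hp i (by simp at hi; omega)).pos)
  have hPQ : (0:ℚ) < Pprod p m := by exact_mod_cast hPpos
  have hwt : ∀ s, s ≤ m → (wt p m s : ℚ) = (Pprod p m : ℚ) / p s := by
    intro s hs
    have hdvd : p s ∣ Pprod p m := Finset.dvd_prod_of_mem p (mem_range.mpr (by omega))
    have hne : (p s : ℚ) ≠ 0 := by exact_mod_cast (hp s (by omega)).pos.ne'
    rw [wt, Nat.cast_div (by exact_mod_cast hdvd) hne]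
  have hsum : ∑ s ∈ range (m+1), (wt p m s : ℚ)
      = (Pprod p m : ℚ) * ∑ s ∈ range (m+1), 1/(p s : ℚ) := by
    rw [Finset.mul_sum]
    refine Finset.sum_congr rfl (fun s hs => ?_)
    rw [hwt s (by simp at hs; omega)]; ring
  have hidx : (idx p m : ℚ) = 2 * Pprod p m * (1 - ∑ s ∈ range (m+1), 1/(p s:ℚ)) := by
    have : (idx p m : ℚ) = 2 * (Pprod p m : ℚ) - 2 * ∑ s ∈ range (m+1), (wt p m s : ℚ) := by
      simp [idx]
    rw [this, hsum]; ring
  constructor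
  · have : (0:ℚ) < (idx p m : ℚ) := by
      rw [hidx]
      have : (0:ℚ) < 1 - ∑ s ∈ range (m+1), 1/(p s:ℚ) := by linarith
      positivity
    exact_mod_cast this
  · intro s t hs ht
    have hq : (0:ℚ) < p (m+1) := by exact_mod_cast (hp (m+1) le_rfl).pos
    have hsum2 : ∑ i ∈ range (m+2), (1:ℚ)/p i
        = (∑ i ∈ range (m+1), (1:ℚ)/p i) + 1/p (m+1) := Finset.sum_range_succ _ _
    have hlt : 1 - ∑ i ∈ range (m+1), (1:ℚ)/p i < 1 / p (m+1) := by
      rw [hsum2] at h2; linarith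
    have hws : (Pprod p m : ℚ)/p (m+1) < wt p m s := by
      rw [hwt s hs]
      exact div_lt_div_of_pos_left hPQ (by exact_mod_cast (hp s (by omega)).pos)
        (by exact_mod_cast hmono s (m+1) (by omega) le_rfl)
    have hwt' : (Pprod p m : ℚ)/p (m+1) < wt p m t := by
      rw [hwt t ht]
      exact div_lt_div_of_pos_left hPQ (by exact_mod_cast (hp t (by omega)).pos)
        (by exact_mod_cast hmono t (m+1) (by omega) le_rfl)
    have key : (idx p m : ℚ) - wt p m s - wt p m t < 0 := by
      rw [hidx]
      have h3 : 2 * (Pprod p m : ℚ) * (1 - ∑ s ∈ range (m+1), 1/(p s:ℚ))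
          < 2 * (Pprod p m : ℚ) * (1 / p (m+1)) := by
        apply mul_lt_mul_of_pos_left hlt; positivity
      have h4 : 2 * (Pprod p m : ℚ) * (1 / p (m+1)) = (Pprod p m:ℚ)/p (m+1) + (Pprod p m:ℚ)/p (m+1) := by
        ring
      linarith
    exact_mod_cast key
end

section
/- Let m ≥ 2 and let p_0 < ... < p_m < p_{m+1} be primes with 1/p_0 + ... + 1/p_m < 1 < 1/p_0 + ... + 1/p_m + 1/p_{m+1}, and suppose p_{m+1} > 6. Set a_s = (p_0···p_m)/p_s and i = 2·p_0···p_m − 2(a_0 + ... + a_m). Then i ≠ a_l for every l ∈ {0, ..., m}. -/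
open Finset

/-- For primes `p 0 < ⋯ < p m < p (m+1)` with
`1/p 0 + ⋯ + 1/p m < 1 < 1/p 0 + ⋯ + 1/p m + 1/p (m+1)`, `m ≥ 2` and `p (m+1) > 6`,
the index `i` is different from every weight `a l`. -/
theorem stmt_16 (m : ℕ) (hm : 2 ≤ m) (p : ℕ → ℕ)
    (hp : ∀ i, i ≤ m + 1 → (p i).Prime)
    (hmono : ∀ i j, i < j → j ≤ m + 1 → p i < p j)
    (h1 : ∑ i ∈ range (m + 1), (1 : ℚ) / p i < 1)
    (h2 : 1 < ∑ i ∈ range (m + 2), (1 : ℚ) / p i)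
    (h6 : 6 < p (m + 1)) :
    ∀ l, l ≤ m → idx p m ≠ (wt p m l : ℤ) := by
  intro l hl h
  -- basic facts
  have hPprime : ∀ s, s ∈ range (m + 1) → (p s).Prime := fun s hs =>
    hp s (by have := mem_range.mp hs; omega)
  -- wt as a product over erase
  have hwt : ∀ s ∈ range (m + 1), wt p m s = ∏ i ∈ (range (m + 1)).erase s, p i := by
    intro s hs
    have hkey : (∏ i ∈ (range (m + 1)).erase s, p i) * p s = Pprod p m :=
      Finset.prod_erase_mul _ _ hs
    have hpos : 0 < p s := (hPprime s hs).pos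
    unfold wt
    rw [← hkey, Nat.mul_div_cancel _ hpos]
  have hlmem : l ∈ range (m + 1) := mem_range.mpr (by omega)
  have hpl : (p l).Prime := hPprime l hlmem
  -- p l does not divide wt p m l
  have hnd : ¬ p l ∣ wt p m l := by
    rw [hwt l hlmem]
    intro hd
    obtain ⟨i, hi, hdi⟩ := (Prime.dvd_finset_prod_iff hpl.prime _).mp hd
    have hiprime := hPprime i (Finset.mem_of_mem_erase hi)
    have heq : p l = p i := (Nat.prime_dvd_prime_iff_eq hpl hiprime).mp hdi
    have hne : i ≠ l := Finset.ne_of_mem_erase hi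
    have him : i ≤ m := by have := mem_range.mp (Finset.mem_of_mem_erase hi); omega
    rcases Nat.lt_or_ge i l with hlt | hge
    · exact absurd heq.symm (Nat.ne_of_lt (hmono i l hlt (by omega)))
    · have : l < i := lt_of_le_of_ne hge (Ne.symm hne)
      exact absurd heq (Nat.ne_of_lt (hmono l i this (by omega)))
  -- p l divides P and each wt s for s ≠ l
  have hdP : (p l : ℤ) ∣ (Pprod p m : ℤ) := by
    exact_mod_cast Int.natCast_dvd_natCast.mpr (Finset.dvd_prod_of_mem p hlmem)
  have hdwt : ∀ s ∈ range (m + 1), s ≠ l → (p l : ℤ) ∣ (wt p m s : ℤ) := by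
    intro s hs hsl
    rw [hwt s hs]
    have : p l ∣ ∏ i ∈ (range (m + 1)).erase s, p i :=
      Finset.dvd_prod_of_mem p (Finset.mem_erase.mpr ⟨Ne.symm hsl, hlmem⟩)
    exact_mod_cast Int.natCast_dvd_natCast.mpr this
  -- from the equation, p l ∣ 3 * wt l
  have hsum : (∑ s ∈ range (m + 1), (wt p m s : ℤ))
      = (wt p m l : ℤ) + ∑ s ∈ (range (m + 1)).erase l, (wt p m s : ℤ) :=
    (Finset.add_sum_erase _ _ hlmem).symm
  have hdvd3 : (p l : ℤ) ∣ 3 * (wt p m l : ℤ) := by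
    have heq : 3 * (wt p m l : ℤ)
        = 2 * (Pprod p m : ℤ) - 2 * ∑ s ∈ (range (m + 1)).erase l, (wt p m s : ℤ) := by
      have := h
      unfold idx at this
      rw [hsum] at this
      linarith
    rw [heq]
    refine dvd_sub (Dvd.dvd.mul_left hdP 2) (Dvd.dvd.mul_left ?_ 2)
    exact Finset.dvd_sum fun s hs => hdwt s (Finset.mem_of_mem_erase hs)
      (Finset.ne_of_mem_erase hs)
  have hdvd3' : p l ∣ 3 * wt p m l := by exact_mod_cast hdvd3
  have hpl3 : p l = 3 := by
    rcases (Nat.Prime.dvd_mul hpl).mp hdvd3' with h3 | hwl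
    · exact (Nat.prime_dvd_prime_iff_eq hpl Nat.prime_three).mp h3
    · exact absurd hwl hnd
  -- rational computation: sum of reciprocals = 1 - 1/(2 * p l) = 5/6
  have hPpos : 0 < Pprod p m := Finset.prod_pos fun i hi => (hPprime i hi).pos
  have hwtQ : ∀ s ∈ range (m + 1), (wt p m s : ℚ) = (Pprod p m : ℚ) * (1 / p s) := by
    intro s hs
    have hpos : 0 < p s := (hPprime s hs).pos
    have hkey : wt p m s * p s = Pprod p m := by
      unfold wt
      exact Nat.div_mul_cancel (Finset.dvd_prod_of_mem p hs)
    have : (wt p m s : ℚ) * p s = (Pprod p m : ℚ) := by exact_mod_cast congrArg (Nat.cast : ℕ → ℚ) hkey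
    field_simp
    linarith [this]
  have hPQ : (0 : ℚ) < (Pprod p m : ℚ) := by exact_mod_cast hPpos
  have hidxQ : 2 * (Pprod p m : ℚ) - 2 * ((Pprod p m : ℚ) * ∑ s ∈ range (m + 1), (1 : ℚ) / p s)
      = (Pprod p m : ℚ) * (1 / p l) := by
    have h' : 2 * (Pprod p m : ℚ) - 2 * ∑ s ∈ range (m + 1), (wt p m s : ℚ) = (wt p m l : ℚ) := by
      have hh := h
      unfold idx at hh
      exact_mod_cast congrArg (Int.cast : ℤ → ℚ) hh
    rw [Finset.mul_sum]
    rw [show (∑ s ∈ range (m + 1), (Pprod p m : ℚ) * (1 / p s))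
        = ∑ s ∈ range (m + 1), (wt p m s : ℚ) from
      Finset.sum_congr rfl fun s hs => (hwtQ s hs).symm]
    rw [h', hwtQ l hlmem]
  have hsumval : ∑ s ∈ range (m + 1), (1 : ℚ) / p s = 1 - 1 / (2 * p l) := by
    have hplQ : (0 : ℚ) < (p l : ℚ) := by exact_mod_cast hpl.pos
    have h' : (Pprod p m : ℚ) * (2 - 2 * ∑ s ∈ range (m + 1), (1 : ℚ) / p s - 1 / p l) = 0 := by
      linear_combination hidxQ
    have h'' : 2 - 2 * ∑ s ∈ range (m + 1), (1 : ℚ) / p s - 1 / p l = 0 := by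
      rcases mul_eq_zero.mp h' with h0 | h0
      · exact absurd h0 (ne_of_gt hPQ)
      · exact h0
    have : (1 : ℚ) / (2 * p l) = (1 / p l) / 2 := by
      field_simp
    rw [this]
    linarith
  rw [hpl3] at hsumval
  -- now derive contradiction with h2 and h6
  have hsplit : ∑ i ∈ range (m + 2), (1 : ℚ) / p i
      = ∑ i ∈ range (m + 1), (1 : ℚ) / p i + 1 / p (m + 1) := Finset.sum_range_succ _ _
  have hpm1 : (7 : ℚ) ≤ (p (m + 1) : ℚ) := by exact_mod_cast (by omega : 7 ≤ p (m + 1))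
  have hrecip : (1 : ℚ) / p (m + 1) ≤ 1 / 7 := by
    apply div_le_div_of_nonneg_left (by norm_num) (by norm_num) hpm1
  rw [hsplit, hsumval] at h2
  norm_num at h2 hrecip ⊢
  linarith
end
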